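/- For every n > s ≥ 0, χ(KG^2(2n, n, s)) ≥ 2s + 2. -/

import Mathlib

/-- `E` is an edge of the generalized Kneser hypergraph `KG^r(n,k,s)`. -/
def KGEdge (r n k s : ℕ) (E : Finset (Finset (Fin n))) : Prop :=
  E.card = r ∧ (∀ A ∈ E, A.card = k) ∧
    ∀ A ∈ E, ∀ B ∈ E, A ≠ B → (A ∩ B).card ≤ s

/-- `c` is a proper coloring of `KG^r(n,k,s)` with `C` colors. -/
def KGProper (r n k s C : ℕ) (c : Finset (Fin n) → Fin C) : Prop :=
  ∀ E : Finset (Finset (Fin n)), KGEdge r n k s E → ¬ ∃ i : Fin C, ∀ A ∈ E, c A = i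

open Finset

namespace KneserHalf

/-! ### Generic parity helpers -/

theorem even_card_of_invol {α : Type*} [DecidableEq α] (s : Finset α) (f : α → α)
    (h1 : ∀ a ∈ s, f a ∈ s) (h2 : ∀ a ∈ s, f (f a) = a) (h3 : ∀ a ∈ s, f a ≠ a) :
    Even s.card := by
  classical
  induction s using Finset.strongInduction with
  | _ s ih =>
    rcases s.eq_empty_or_nonempty with rfl | ⟨a, ha⟩
    · simp
    · have hfa : f a ∈ s := h1 a ha
      have hne : f a ≠ a := h3 a ha
      set t := (s.erase a).erase (f a) with ht
      have hss : t ⊂ s := by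
        refine Finset.ssubset_of_subset_of_ssubset ?_ (Finset.erase_ssubset ha)
        exact Finset.erase_subset _ _
      have hmem : ∀ b, b ∈ t ↔ b ∈ s ∧ b ≠ a ∧ b ≠ f a := by
        intro b; simp [ht, and_comm, and_left_comm]; tauto
      have h1' : ∀ b ∈ t, f b ∈ t := by
        intro b hb
        rcases (hmem b).1 hb with ⟨hbs, hba, hbfa⟩
        refine (hmem (f b)).2 ⟨h1 b hbs, ?_, ?_⟩
        · intro h; exact hbfa (by rw [← h2 b hbs, h])
        · intro h; exact hba (by rw [← h2 b hbs, h, h2 a ha])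
      have h2' : ∀ b ∈ t, f (f b) = b := fun b hb => h2 b ((hmem b).1 hb).1
      have h3' : ∀ b ∈ t, f b ≠ b := fun b hb => h3 b ((hmem b).1 hb).1
      have hcard : s.card = t.card + 2 := by
        have hfa' : f a ∈ s.erase a := Finset.mem_erase.2 ⟨hne, hfa⟩
        have h1c : (s.erase a).card = s.card - 1 := Finset.card_erase_of_mem ha
        have h2c : t.card = (s.erase a).card - 1 := Finset.card_erase_of_mem hfa'
        have hpos : 0 < s.card := Finset.card_pos.2 ⟨a, ha⟩
        have hpos2 : 0 < (s.erase a).card := Finset.card_pos.2 ⟨f a, hfa'⟩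
        omega
      have := ih t hss h1' h2' h3'
      rw [hcard]
      rcases this with ⟨c, hc⟩
      exact ⟨c + 1, by omega⟩

/-- Threshold parity lemma over finite sets of naturals (auxiliary version). -/
theorem threshold_parity_aux (s : Finset ℕ) (A : ℕ → Prop) [DecidablePred A] :
    (s.filter (fun m => (∀ m' ∈ s, m' < m → A m') ∧ (∀ m' ∈ s, m < m' → ¬ A m'))).card % 2
      = if s = ∅ then 0 else (if (∀ m ∈ s, A m) ∨ (∀ m ∈ s, ¬ A m) then 1 else 0) := by
  classical
  induction s using Finset.induction_on_max with
  | empty => simp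
  | insert M t hMt ih =>
    have hMnot : M ∉ t := fun h => lt_irrefl M (hMt M h)
    have hins : insert M t ≠ ∅ := by simp
    have hcondM : ((∀ m' ∈ insert M t, m' < M → A m') ∧ (∀ m' ∈ insert M t, M < m' → ¬ A m'))
        ↔ (∀ m' ∈ t, A m') := by
      constructor
      · rintro ⟨h1, _⟩ m' hm'; exact h1 m' (mem_insert_of_mem hm') (hMt m' hm')
      · intro h
        refine ⟨?_, ?_⟩
        · intro m' hm' hlt
          rcases mem_insert.1 hm' with rfl | hm''
          · omega
          · exact h m' hm''
        · intro m' hm' hlt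
          rcases mem_insert.1 hm' with rfl | hm''
          · omega
          · exact absurd hlt (by have := hMt m' hm''; omega)
    have hcondt : ∀ m ∈ t,
        (((∀ m' ∈ insert M t, m' < m → A m') ∧ (∀ m' ∈ insert M t, m < m' → ¬ A m'))
        ↔ ((((∀ m' ∈ t, m' < m → A m') ∧ (∀ m' ∈ t, m < m' → ¬ A m'))) ∧ ¬ A M)) := by
      intro m hm
      have hmM : m < M := hMt m hm
      constructor
      · rintro ⟨h1, h2⟩
        exact ⟨⟨fun m' hm' h => h1 m' (mem_insert_of_mem hm') h,
               fun m' hm' h => h2 m' (mem_insert_of_mem hm') h⟩,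
               h2 M (mem_insert_self _ _) hmM⟩
      · rintro ⟨⟨h1, h2⟩, hAM⟩
        refine ⟨?_, ?_⟩
        · intro m' hm' h
          rcases mem_insert.1 hm' with rfl | hm''
          · omega
          · exact h1 m' hm'' h
        · intro m' hm' h
          rcases mem_insert.1 hm' with rfl | hm''
          · exact hAM
          · exact h2 m' hm'' h
    have hfe : (t.filter (fun m => (∀ m' ∈ insert M t, m' < m → A m') ∧
          (∀ m' ∈ insert M t, m < m' → ¬ A m')))
        = t.filter (fun m => (((∀ m' ∈ t, m' < m → A m') ∧ (∀ m' ∈ t, m < m' → ¬ A m'))) ∧ ¬ A M) :=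
      Finset.filter_congr hcondt
    rw [Finset.filter_insert]
    rcases t.eq_empty_or_nonempty with rfl | htne
    · -- singleton case
      have hPM : (∀ m' ∈ insert M (∅ : Finset ℕ), m' < M → A m') ∧
          (∀ m' ∈ insert M (∅ : Finset ℕ), M < m' → ¬ A m') := hcondM.2 (by simp)
      rw [if_pos hPM]
      simp only [Finset.filter_empty, hins, if_false]
      by_cases hAM : A M <;> simp [hAM]
    · have htne' : t ≠ ∅ := htne.ne_empty
      by_cases hAM : A M
      · -- filter over t is empty
        have hft : (t.filter (fun m => (∀ m' ∈ insert M t, m' < m → A m') ∧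
              (∀ m' ∈ insert M t, m < m' → ¬ A m'))) = ∅ := by
          rw [hfe]
          refine Finset.filter_false_of_mem ?_
          intro m hm h
          exact h.2 hAM
        by_cases hall : ∀ m' ∈ t, A m'
        · rw [if_pos (hcondM.2 hall), hft]
          have : (∀ m ∈ insert M t, A m) := by
            intro m hm; rcases mem_insert.1 hm with rfl | hm'
            · exact hAM
            · exact hall m hm'
          simp [hins, this, hall]
          exact hall
        · rw [if_neg (fun h => hall (hcondM.1 h)), hft]
          have h1 : ¬ (∀ m ∈ insert M t, A m) := by
            intro h; exact hall (fun m hm => h m (mem_insert_of_mem hm))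
          have h2 : ¬ (∀ m ∈ insert M t, ¬ A m) := by
            intro h; exact h M (mem_insert_self _ _) hAM
          rw [Finset.card_empty]
          have h3 : ¬ ((A M ∧ ∀ a ∈ t, A a) ∨ (¬A M ∧ ∀ a ∈ t, ¬ A a)) := by tauto
          simp [hins, h3]
      · -- ¬ A M
        have hft : (t.filter (fun m => (∀ m' ∈ insert M t, m' < m → A m') ∧
              (∀ m' ∈ insert M t, m < m' → ¬ A m')))
            = t.filter (fun m => (∀ m' ∈ t, m' < m → A m') ∧ (∀ m' ∈ t, m < m' → ¬ A m')) := by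
          rw [hfe]
          refine Finset.filter_congr ?_
          intro m hm; simp [hAM]
        rw [hfe] at hft
        rw [hfe]  -- normalize
        by_cases hall : ∀ m' ∈ t, A m'
        · rw [if_pos (hcondM.2 hall)]
          have hnotmem : M ∉ t.filter (fun m => (((∀ m' ∈ t, m' < m → A m') ∧
              (∀ m' ∈ t, m < m' → ¬ A m'))) ∧ ¬ A M) := fun h => hMnot (Finset.mem_filter.1 h).1
          rw [Finset.card_insert_of_notMem hnotmem, hft]
          have hihval : (t.filter (fun m => (∀ m' ∈ t, m' < m → A m') ∧
              (∀ m' ∈ t, m < m' → ¬ A m'))).card % 2 = 1 := by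
            rw [ih, if_neg htne', if_pos (Or.inl hall)]
          have h1 : ¬ (∀ m ∈ insert M t, A m) := fun h => hAM (h M (mem_insert_self _ _))
          have h2 : ¬ (∀ m ∈ insert M t, ¬ A m) := by
            intro h
            obtain ⟨m, hm⟩ := htne
            exact h m (mem_insert_of_mem hm) (hall m hm)
          simp only [hins, if_false, h1, h2, or_self]
          omega
        · rw [if_neg (fun h => hall (hcondM.1 h)), hft]
          have h1 : ¬ (∀ m ∈ insert M t, A m) := fun h => hAM (h M (mem_insert_self _ _))
          have h2 : (∀ m ∈ insert M t, ¬ A m) ↔ (∀ m ∈ t, ¬ A m) := by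
            constructor
            · intro h m hm; exact h m (mem_insert_of_mem hm)
            · intro h m hm
              rcases mem_insert.1 hm with rfl | hm'
              · exact hAM
              · exact h m hm'
          rw [ih, if_neg htne']
          simp only [hins, if_false, h1, false_or, h2]
          simp [hall]

/-- Threshold parity lemma over finite sets of naturals. -/
theorem threshold_parity (s : Finset ℕ) (hs : s.Nonempty) (A : ℕ → Prop) [DecidablePred A] :
    (s.filter (fun m => (∀ m' ∈ s, m' < m → A m') ∧ (∀ m' ∈ s, m < m' → ¬ A m'))).card % 2
      = if (∀ m ∈ s, A m) ∨ (∀ m ∈ s, ¬ A m) then 1 else 0 := by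
  rw [threshold_parity_aux, if_neg hs.ne_empty]


/-! ### Alternating label systems -/

def mg {K : ℕ} (ℓ : Fin K → ℤ) (i : Fin K) : ℕ := (ℓ i).natAbs

def rk {K : ℕ} (ℓ : Fin K → ℤ) (S : Finset (Fin K)) (i : Fin K) : ℕ :=
  (S.filter (fun j => mg ℓ j < mg ℓ i)).card

/-- alternating label set, smallest magnitude positive -/
def AltP {K : ℕ} (ℓ : Fin K → ℤ) (S : Finset (Fin K)) : Prop :=
  (∀ i ∈ S, ∀ j ∈ S, mg ℓ i = mg ℓ j → i = j) ∧ ∀ i ∈ S, (0 < ℓ i ↔ Even (rk ℓ S i))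

/-- alternating label set, smallest magnitude negative -/
def AltM {K : ℕ} (ℓ : Fin K → ℤ) (S : Finset (Fin K)) : Prop :=
  (∀ i ∈ S, ∀ j ∈ S, mg ℓ i = mg ℓ j → i = j) ∧ ∀ i ∈ S, (0 < ℓ i ↔ ¬ Even (rk ℓ S i))

theorem rk_congr {K : ℕ} {ℓ ℓ' : Fin K → ℤ} {S : Finset (Fin K)}
    (h : ∀ i ∈ S, ℓ' i = ℓ i) {i : Fin K} (hi : i ∈ S) : rk ℓ' S i = rk ℓ S i := by
  unfold rk
  congr 1
  apply Finset.filter_congr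
  intro j hj
  simp [mg, h j hj, h i hi]

theorem AltP_congr {K : ℕ} {ℓ ℓ' : Fin K → ℤ} {S : Finset (Fin K)}
    (h : ∀ i ∈ S, ℓ' i = ℓ i) : AltP ℓ' S ↔ AltP ℓ S := by
  unfold AltP
  constructor
  · rintro ⟨h1, h2⟩
    refine ⟨fun i hi j hj hm => h1 i hi j hj (by simp [mg, h i hi, h j hj] at hm ⊢; exact hm), ?_⟩
    intro i hi
    rw [← h i hi, ← rk_congr h hi]
    exact h2 i hi
  · rintro ⟨h1, h2⟩
    refine ⟨fun i hi j hj hm => h1 i hi j hj (by simp [mg, h i hi, h j hj] at hm ⊢; exact hm), ?_⟩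
    intro i hi
    rw [h i hi, rk_congr h hi]
    exact h2 i hi

theorem AltP_iff_AltM_of_neg {K : ℕ} {ℓ ℓ' : Fin K → ℤ} {S : Finset (Fin K)}
    (h : ∀ i ∈ S, ℓ' i = - ℓ i) (h0 : ∀ i ∈ S, ℓ i ≠ 0) : AltP ℓ' S ↔ AltM ℓ S := by
  unfold AltP AltM
  have hm : ∀ i ∈ S, mg ℓ' i = mg ℓ i := by
    intro i hi; simp [mg, h i hi]
  have hr : ∀ i ∈ S, rk ℓ' S i = rk ℓ S i := by
    intro i hi
    unfold rk
    congr 1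
    apply Finset.filter_congr
    intro j hj
    simp [hm j hj, hm i hi]
  have hpos : ∀ i ∈ S, (0 < ℓ' i ↔ ¬ (0 < ℓ i)) := by
    intro i hi
    rw [h i hi]
    constructor
    · intro hlt hlt'; omega
    · intro hle
      have := h0 i hi
      omega
  constructor
  · rintro ⟨h1, h2⟩
    refine ⟨fun i hi j hj hmm => h1 i hi j hj (by rw [hm i hi, hm j hj]; exact hmm), ?_⟩
    intro i hi
    have := h2 i hi
    rw [hpos i hi, hr i hi] at this
    tauto
  · rintro ⟨h1, h2⟩
    refine ⟨fun i hi j hj hmm => h1 i hi j hj (by rw [← hm i hi, ← hm j hj]; exact hmm), ?_⟩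
    intro i hi
    have := h2 i hi
    rw [hpos i hi, hr i hi]
    tauto

theorem AltP_image {K₀ K₁ : ℕ} (φ : Fin K₀ → Fin K₁) (hφ : Function.Injective φ)
    (ℓ₀ : Fin K₀ → ℤ) (ℓ₁ : Fin K₁ → ℤ) (hl : ∀ t, ℓ₁ (φ t) = ℓ₀ t) (S : Finset (Fin K₀)) :
    AltP ℓ₁ (S.image φ) ↔ AltP ℓ₀ S := by
  have hmg : ∀ t, mg ℓ₁ (φ t) = mg ℓ₀ t := by intro t; simp [mg, hl t]
  have hrk : ∀ i ∈ S, rk ℓ₁ (S.image φ) (φ i) = rk ℓ₀ S i := by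
    intro i _
    unfold rk
    rw [show ((S.image φ).filter (fun j => mg ℓ₁ j < mg ℓ₁ (φ i)))
        = (S.filter (fun j => mg ℓ₀ j < mg ℓ₀ i)).image φ from ?_]
    · exact Finset.card_image_of_injective _ hφ
    · ext b
      simp only [Finset.mem_filter, Finset.mem_image]
      constructor
      · rintro ⟨⟨a, ha, rfl⟩, hlt⟩
        exact ⟨a, ⟨ha, by rwa [hmg a, hmg i] at hlt⟩, rfl⟩
      · rintro ⟨a, ⟨ha, hlt⟩, rfl⟩
        exact ⟨⟨a, ha, rfl⟩, by rwa [hmg a, hmg i]⟩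
  unfold AltP
  constructor
  · rintro ⟨h1, h2⟩
    constructor
    · intro i hi j hj hmm
      have := h1 (φ i) (Finset.mem_image_of_mem _ hi) (φ j) (Finset.mem_image_of_mem _ hj)
        (by rw [hmg i, hmg j]; exact hmm)
      exact hφ this
    · intro i hi
      have := h2 (φ i) (Finset.mem_image_of_mem _ hi)
      rwa [hl i, hrk i hi] at this
  · rintro ⟨h1, h2⟩
    constructor
    · rintro i hi j hj hmm
      rcases Finset.mem_image.1 hi with ⟨a, ha, rfl⟩
      rcases Finset.mem_image.1 hj with ⟨b, hb, rfl⟩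
      rw [hmg a, hmg b] at hmm
      rw [h1 a ha b hb hmm]
    · rintro i hi
      rcases Finset.mem_image.1 hi with ⟨a, ha, rfl⟩
      rw [hl a, hrk a ha]
      exact h2 a ha


instance {K : ℕ} (ℓ : Fin K → ℤ) (S : Finset (Fin K)) : Decidable (AltP ℓ S) := by
  unfold AltP; infer_instance

instance {K : ℕ} (ℓ : Fin K → ℤ) (S : Finset (Fin K)) : Decidable (AltM ℓ S) := by
  unfold AltM; infer_instance

/-! ### The deletion parity lemma -/

theorem rk_erase {K : ℕ} (ℓ : Fin K → ℤ) (j i : Fin K) (hij : i ≠ j) :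
    rk ℓ (univ.erase j) i = rk ℓ univ i - (if mg ℓ j < mg ℓ i then 1 else 0) := by
  unfold rk
  have : (univ.erase j).filter (fun t => mg ℓ t < mg ℓ i)
      = (univ.filter (fun t => mg ℓ t < mg ℓ i)).erase j := by
    ext b; simp only [Finset.mem_filter, Finset.mem_erase, Finset.mem_univ, true_and]; tauto
  rw [this]
  by_cases hj : mg ℓ j < mg ℓ i
  · rw [Finset.card_erase_of_mem (by simp [hj]), if_pos hj]
  · rw [Finset.erase_eq_of_notMem (by simp [hj]), if_neg hj, Nat.sub_zero]

theorem Dplus {K : ℕ} (hK : K ≠ 0) (ℓ : Fin K → ℤ) (h0 : ∀ i, ℓ i ≠ 0)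
    (heq : ∀ i j, mg ℓ i = mg ℓ j → ℓ i = ℓ j) :
    (univ.filter (fun j => AltP ℓ (univ.erase j))).card % 2
      = if (AltP ℓ univ ∨ AltM ℓ univ) then 1 else 0 := by
  have hKpos : 0 < K := Nat.pos_of_ne_zero hK
  by_cases hinj : ∀ i j : Fin K, mg ℓ i = mg ℓ j → i = j
  · -- injective magnitudes
    set A : Fin K → Prop := fun i => (0 < ℓ i ↔ Even (rk ℓ univ i)) with hA
    have claim1 : ∀ j : Fin K, AltP ℓ (univ.erase j) ↔
        ((∀ i, mg ℓ i < mg ℓ j → A i) ∧ (∀ i, mg ℓ j < mg ℓ i → ¬ A i)) := by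
      intro j
      unfold AltP
      constructor
      · rintro ⟨_, h⟩
        constructor
        · intro i hlt
          have hij : i ≠ j := fun hh => by rw [hh] at hlt; omega
          have := h i (Finset.mem_erase.2 ⟨hij, Finset.mem_univ i⟩)
          rwa [rk_erase ℓ j i hij, if_neg (by omega), Nat.sub_zero] at this
        · intro i hlt
          have hij : i ≠ j := fun hh => by rw [hh] at hlt; omega
          have := h i (Finset.mem_erase.2 ⟨hij, Finset.mem_univ i⟩)
          rw [rk_erase ℓ j i hij, if_pos hlt] at this
          have hge : 1 ≤ rk ℓ univ i := by
            have : j ∈ univ.filter (fun t => mg ℓ t < mg ℓ i) := by simp [hlt]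
            have := Finset.card_pos.2 ⟨j, this⟩
            unfold rk; omega
          have heven : Even (rk ℓ univ i - 1) ↔ ¬ Even (rk ℓ univ i) := by
            rw [Nat.even_sub hge]
            simp [Nat.even_iff, Nat.odd_iff]
          rw [heven] at this
          rw [hA]
          tauto
      · rintro ⟨hlo, hhi⟩
        refine ⟨fun i _ i' _ hh => hinj i i' hh, ?_⟩
        intro i hi
        rcases Finset.mem_erase.1 hi with ⟨hij, _⟩
        rcases Nat.lt_trichotomy (mg ℓ i) (mg ℓ j) with hlt | heqq | hgt
        · have := hlo i hlt
          rwa [rk_erase ℓ j i hij, if_neg (by omega), Nat.sub_zero]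
        · exact absurd (hinj i j heqq) hij
        · have := hhi i hgt
          rw [rk_erase ℓ j i hij, if_pos hgt]
          have hge : 1 ≤ rk ℓ univ i := by
            have hjm : j ∈ univ.filter (fun t => mg ℓ t < mg ℓ i) := by simp [hgt]
            have := Finset.card_pos.2 ⟨j, hjm⟩
            unfold rk; omega
          have heven : Even (rk ℓ univ i - 1) ↔ ¬ Even (rk ℓ univ i) := by
            rw [Nat.even_sub hge]
            simp [Nat.even_iff, Nat.odd_iff]
          rw [heven]
          rw [hA] at this
          tauto
    have hinj' : ∀ i ∈ (univ : Finset (Fin K)), ∀ i' ∈ univ, mg ℓ i = mg ℓ i' → i = i' :=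
      fun i _ i' _ h => hinj i i' h
    have claim2 : (AltP ℓ univ ∨ AltM ℓ univ) ↔ ((∀ i, A i) ∨ (∀ i, ¬ A i)) := by
      unfold AltP AltM
      constructor
      · rintro (⟨_, h⟩ | ⟨_, h⟩)
        · exact Or.inl fun i => h i (Finset.mem_univ i)
        · refine Or.inr fun i => ?_
          have := h i (Finset.mem_univ i)
          rw [hA]
          tauto
      · rintro (h | h)
        · exact Or.inl ⟨hinj', fun i _ => h i⟩
        · refine Or.inr ⟨hinj', fun i _ => ?_⟩
          have := h i
          rw [hA] at this
          tauto
    -- transfer to a Finset ℕ of magnitudes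
    set s : Finset ℕ := univ.image (mg ℓ) with hsdef
    have hsne : s.Nonempty := ⟨mg ℓ ⟨0, hKpos⟩, Finset.mem_image_of_mem _ (Finset.mem_univ _)⟩
    set A' : ℕ → Prop := fun m => ∀ i, mg ℓ i = m → A i with hA'
    have hAA : ∀ i : Fin K, A' (mg ℓ i) ↔ A i := by
      intro i
      constructor
      · intro h; exact h i rfl
      · intro h i' hi'; rwa [hinj i' i hi']
    have himg : (univ.filter (fun j => AltP ℓ (univ.erase j))).image (mg ℓ)
        = s.filter (fun m => (∀ m' ∈ s, m' < m → A' m') ∧ (∀ m' ∈ s, m < m' → ¬ A' m')) := by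
      ext m
      simp only [Finset.mem_image, Finset.mem_filter, Finset.mem_univ, true_and]
      constructor
      · rintro ⟨j, hj, rfl⟩
        rw [claim1 j] at hj
        refine ⟨Finset.mem_image_of_mem _ (Finset.mem_univ _), ?_, ?_⟩
        · rintro m' hm' hlt i rfl
          exact hj.1 i hlt
        · rintro m' hm' hlt hA'm
          rcases Finset.mem_image.1 hm' with ⟨i, _, rfl⟩
          exact hj.2 i hlt ((hAA i).1 hA'm)
      · rintro ⟨hms, h1, h2⟩
        rcases Finset.mem_image.1 hms with ⟨j, _, rfl⟩
        refine ⟨j, ?_, rfl⟩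
        rw [claim1 j]
        constructor
        · intro i hlt
          exact (hAA i).1 (h1 (mg ℓ i) (Finset.mem_image_of_mem _ (Finset.mem_univ _)) hlt)
        · intro i hlt hAi
          exact h2 (mg ℓ i) (Finset.mem_image_of_mem _ (Finset.mem_univ _)) hlt ((hAA i).2 hAi)
    have hcard : (univ.filter (fun j => AltP ℓ (univ.erase j))).card
        = (s.filter (fun m => (∀ m' ∈ s, m' < m → A' m') ∧ (∀ m' ∈ s, m < m' → ¬ A' m'))).card := by
      rw [← himg]
      exact (Finset.card_image_of_injOn (fun a _ b _ h => hinj a b h)).symm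
    have hall1 : (∀ m ∈ s, A' m) ↔ ∀ i, A i := by
      constructor
      · intro h i
        exact (hAA i).1 (h (mg ℓ i) (Finset.mem_image_of_mem _ (Finset.mem_univ _)))
      · rintro h m hm i rfl
        exact h i
    have hall2 : (∀ m ∈ s, ¬ A' m) ↔ ∀ i, ¬ A i := by
      constructor
      · intro h i hAi
        exact h (mg ℓ i) (Finset.mem_image_of_mem _ (Finset.mem_univ _)) ((hAA i).2 hAi)
      · rintro h m hm hA'm
        rcases Finset.mem_image.1 hm with ⟨i, _, rfl⟩
        exact h i ((hAA i).1 hA'm)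
    rw [hcard, threshold_parity s hsne A']
    by_cases hc : (∀ i, A i) ∨ (∀ i, ¬ A i)
    · have hL : (∀ m ∈ s, A' m) ∨ (∀ m ∈ s, ¬ A' m) := by
        rcases hc with h | h
        · exact Or.inl (hall1.2 h)
        · exact Or.inr (hall2.2 h)
      rw [if_pos hL, if_pos (claim2.2 hc)]
    · have hL : ¬ ((∀ m ∈ s, A' m) ∨ (∀ m ∈ s, ¬ A' m)) := by
        rintro (h | h)
        · exact hc (Or.inl (hall1.1 h))
        · exact hc (Or.inr (hall2.1 h))
      rw [if_neg hL, if_neg (fun h => hc (claim2.1 h))]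
  · -- non-injective magnitudes
    push_neg at hinj
    obtain ⟨i₁, i₂, hmg12, hne12⟩ := hinj
    have hl12 : ℓ i₁ = ℓ i₂ := heq i₁ i₂ hmg12
    have hsub : ∀ j ∈ univ.filter (fun j => AltP ℓ (univ.erase j)), j = i₁ ∨ j = i₂ := by
      intro j hj
      rw [Finset.mem_filter] at hj
      by_contra hcon
      push_neg at hcon
      have h1 : i₁ ∈ univ.erase j := Finset.mem_erase.2 ⟨fun h => hcon.1 h.symm, Finset.mem_univ _⟩
      have h2 : i₂ ∈ univ.erase j := Finset.mem_erase.2 ⟨fun h => hcon.2 h.symm, Finset.mem_univ _⟩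
      exact hne12 (hj.2.1 i₁ h1 i₂ h2 hmg12)
    have hswap : AltP ℓ (univ.erase i₁) ↔ AltP ℓ (univ.erase i₂) := by
      have hperm : (univ.erase i₂) = (univ.erase i₁).image (Equiv.swap i₁ i₂) := by
        rw [Finset.image_erase (Equiv.injective _), Finset.image_univ_equiv, Equiv.swap_apply_left]
      rw [hperm]
      have hlcomm : ∀ t, ℓ (Equiv.swap i₁ i₂ t) = ℓ t := by
        intro t
        rcases eq_or_ne t i₁ with rfl | h1
        · simp [Equiv.swap_apply_left, hl12]
        rcases eq_or_ne t i₂ with rfl | h2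
        · simp [Equiv.swap_apply_right, hl12]
        · rw [Equiv.swap_apply_of_ne_of_ne h1 h2]
      exact (AltP_image (Equiv.swap i₁ i₂) (Equiv.injective _) ℓ ℓ hlcomm (univ.erase i₁)).symm
    have hrhs : ¬ (AltP ℓ univ ∨ AltM ℓ univ) := by
      rintro (h | h) <;> exact hne12 (h.1 i₁ (Finset.mem_univ _) i₂ (Finset.mem_univ _) hmg12)
    rw [if_neg hrhs]
    by_cases h1 : AltP ℓ (univ.erase i₁)
    · have h2 : AltP ℓ (univ.erase i₂) := hswap.1 h1
      have : univ.filter (fun j => AltP ℓ (univ.erase j)) = {i₁, i₂} := by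
        apply Finset.Subset.antisymm
        · intro j hj
          rcases hsub j hj with rfl | rfl <;> simp
        · intro j hj
          rcases Finset.mem_insert.1 hj with rfl | hj
          · simp [h1]
          · rcases Finset.mem_singleton.1 hj with rfl
            simp [h2]
      rw [this, Finset.card_pair hne12]
    · have h2 : ¬ AltP ℓ (univ.erase i₂) := fun h => h1 (hswap.2 h)
      have : univ.filter (fun j => AltP ℓ (univ.erase j)) = ∅ := by
        apply Finset.eq_empty_of_forall_notMem
        intro j hj
        have hj' := hj
        rw [Finset.mem_filter] at hj'
        rcases hsub j hj with rfl | rfl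
        · exact h1 hj'.2
        · exact h2 hj'.2
      rw [this, Finset.card_empty]


/-! ### Flags of signed sets -/

def below {k : ℕ} (x y : Fin k → SignType) : Prop := ∀ i, x i = 0 ∨ x i = y i

abbrev Flg (k : ℕ) := (Fin k ≃ Fin k) × (Fin k → Bool)

def vert {k : ℕ} (f : Flg k) (j : Fin k) : Fin k → SignType :=
  fun i => if f.1.symm i ≤ j then (if f.2 (f.1.symm i) then 1 else -1) else 0

def lab {k : ℕ} (lam : (Fin k → SignType) → ℤ) (f : Flg k) (j : Fin k) : ℤ := lam (vert f j)

noncomputable def Np (k : ℕ) (lam : (Fin k → SignType) → ℤ) : ℕ :=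
  (univ.filter (fun f : Flg k => AltP (lab lam f) univ)).card

theorem vert_ne_zero {k : ℕ} (f : Flg k) (j : Fin k) : vert f j ≠ 0 := by
  intro h
  have := congrFun h (f.1 j)
  simp only [vert, Equiv.symm_apply_apply, le_refl, if_pos, Pi.zero_apply] at this
  rcases hb : f.2 j with _ | _ <;> rw [hb] at this <;> simp at this

theorem vert_below {k : ℕ} (f : Flg k) {j j' : Fin k} (h : j ≤ j') :
    below (vert f j) (vert f j') := by
  intro i
  unfold vert
  by_cases hc : f.1.symm i ≤ j
  · rw [if_pos hc, if_pos (le_trans hc h)]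
    right; rfl
  · rw [if_neg hc]
    left; rfl

theorem lab_ne_zero {k : ℕ} {lam : (Fin k → SignType) → ℤ}
    (hne : ∀ x, x ≠ 0 → lam x ≠ 0) (f : Flg k) (j : Fin k) : lab lam f j ≠ 0 :=
  hne _ (vert_ne_zero f j)

theorem lab_mg_eq {k : ℕ} {lam : (Fin k → SignType) → ℤ}
    (hcomp : ∀ x y, x ≠ 0 → below x y → lam x ≠ - lam y) (f : Flg k) :
    ∀ t t', mg (lab lam f) t = mg (lab lam f) t' → lab lam f t = lab lam f t' := by
  have key : ∀ t t' : Fin k, t ≤ t' → mg (lab lam f) t = mg (lab lam f) t' →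
      lab lam f t = lab lam f t' := by
    intro t t' hle hm
    rcases Int.natAbs_eq_natAbs_iff.1 hm with h | h
    · exact h
    · exact absurd h (hcomp _ _ (vert_ne_zero f t) (vert_below f hle))
  intro t t' hm
  rcases le_total t t' with hle | hle
  · exact key t t' hle hm
  · exact (key t' t hle hm.symm).symm

/-- negation of a flag -/
def negF {k : ℕ} (f : Flg k) : Flg k := (f.1, fun t => ! f.2 t)

theorem vert_negF {k : ℕ} (f : Flg k) (j : Fin k) : vert (negF f) j = - vert f j := by
  funext i
  simp only [vert, negF, Pi.neg_apply]
  by_cases hc : f.1.symm i ≤ j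
  · simp only [hc, if_true]
    rcases Bool.eq_false_or_eq_true (f.2 (f.1.symm i)) with hb | hb <;>
      simp only [hb, Bool.not_false, Bool.not_true] <;> decide
  · simp only [hc, if_false]; rfl

theorem lab_negF {k : ℕ} {lam : (Fin k → SignType) → ℤ}
    (hanti : ∀ x, x ≠ 0 → lam (-x) = - lam x) (f : Flg k) (j : Fin k) :
    lab lam (negF f) j = - lab lam f j := by
  unfold lab
  rw [vert_negF, hanti _ (vert_ne_zero f j)]

theorem negF_negF {k : ℕ} (f : Flg k) : negF (negF f) = f := by
  unfold negF
  refine Prod.ext rfl ?_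
  funext t
  simp

def utop {k : ℕ} (f : Flg (k+1)) : Prop := f.2 (f.1.symm (Fin.last k)) = true

instance {k : ℕ} (f : Flg (k+1)) : Decidable (utop f) := by unfold utop; infer_instance

theorem utop_negF {k : ℕ} (f : Flg (k+1)) : utop (negF f) ↔ ¬ utop f := by
  unfold utop negF
  simp

theorem not_AltP_and_AltM {k : ℕ} (ℓ : Fin (k+1) → ℤ) :
    ¬ (AltP ℓ univ ∧ AltM ℓ univ) := by
  rintro ⟨⟨_, h1⟩, ⟨_, h2⟩⟩
  have e1 := h1 0 (Finset.mem_univ _)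
  have e2 := h2 0 (Finset.mem_univ _)
  tauto


noncomputable def Pset {k : ℕ} (lam : (Fin (k+1) → SignType) → ℤ) : Finset (Flg (k+1) × Fin (k+1)) :=
  univ.filter (fun p => utop p.1 ∧ AltP (lab lam p.1) ((univ : Finset (Fin (k+1))).erase p.2))

theorem Np_eq_rooms {k : ℕ} (lam : (Fin (k+1) → SignType) → ℤ)
    (hne : ∀ x, x ≠ 0 → lam x ≠ 0)
    (hanti : ∀ x, x ≠ 0 → lam (-x) = - lam x) :
    Np (k+1) lam = (univ.filter (fun f : Flg (k+1) =>
      utop f ∧ (AltP (lab lam f) univ ∨ AltM (lab lam f) univ))).card := by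
  classical
  have key : ∀ f : Flg (k+1), AltP (lab lam f) univ ↔ AltM (lab lam (negF f)) univ := by
    intro f
    refine AltP_iff_AltM_of_neg (ℓ := lab lam (negF f)) (ℓ' := lab lam f) ?_ ?_
    · intro i _
      rw [lab_negF hanti, neg_neg]
    · intro i _
      exact lab_ne_zero hne (negF f) i
  have h1 : Np (k+1) lam
      = (univ.filter (fun f : Flg (k+1) => AltP (lab lam f) univ ∧ utop f)).card
      + (univ.filter (fun f : Flg (k+1) => AltP (lab lam f) univ ∧ ¬ utop f)).card := by
    rw [Np, ← Finset.filter_filter, ← Finset.filter_filter]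
    exact (Finset.card_filter_add_card_filter_not (p := utop)).symm
  have h2 : (univ.filter (fun f : Flg (k+1) => AltP (lab lam f) univ ∧ ¬ utop f)).card
      = (univ.filter (fun f : Flg (k+1) => AltM (lab lam f) univ ∧ utop f)).card := by
    refine Finset.card_bij' (fun f _ => negF f) (fun f _ => negF f) ?_ ?_ ?_ ?_
    · intro f hf
      rcases Finset.mem_filter.1 hf with ⟨_, hP, hu⟩
      refine Finset.mem_filter.2 ⟨Finset.mem_univ _, (key f).1 hP, ?_⟩
      rw [utop_negF]; exact hu
    · intro f hf
      rcases Finset.mem_filter.1 hf with ⟨_, hM, hu⟩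
      refine Finset.mem_filter.2 ⟨Finset.mem_univ _, ?_, ?_⟩
      · rw [key (negF f), negF_negF]; exact hM
      · intro hcon
        exact (utop_negF f).1 hcon hu
    · intro f _; exact negF_negF f
    · intro f _; exact negF_negF f
  have h3 : (univ.filter (fun f : Flg (k+1) =>
        utop f ∧ (AltP (lab lam f) univ ∨ AltM (lab lam f) univ)))
      = (univ.filter (fun f : Flg (k+1) => AltP (lab lam f) univ ∧ utop f))
        ∪ (univ.filter (fun f : Flg (k+1) => AltM (lab lam f) univ ∧ utop f)) := by
    ext f
    simp only [Finset.mem_filter, Finset.mem_union, Finset.mem_univ, true_and]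
    tauto
  have h4 : Disjoint (univ.filter (fun f : Flg (k+1) => AltP (lab lam f) univ ∧ utop f))
      (univ.filter (fun f : Flg (k+1) => AltM (lab lam f) univ ∧ utop f)) := by
    rw [Finset.disjoint_left]
    intro f hf hf'
    rcases Finset.mem_filter.1 hf with ⟨_, hP, _⟩
    rcases Finset.mem_filter.1 hf' with ⟨_, hM, _⟩
    exact not_AltP_and_AltM _ ⟨hP, hM⟩
  rw [h1, h2, h3, Finset.card_union_of_disjoint h4]

theorem rooms_parity {k : ℕ} (lam : (Fin (k+1) → SignType) → ℤ)
    (hne : ∀ x, x ≠ 0 → lam x ≠ 0)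
    (hcomp : ∀ x y, x ≠ 0 → below x y → lam x ≠ - lam y) :
    (univ.filter (fun f : Flg (k+1) =>
      utop f ∧ (AltP (lab lam f) univ ∨ AltM (lab lam f) univ))).card % 2
      = (Pset lam).card % 2 := by
  classical
  have hmap : ∀ p ∈ Pset lam, p.1 ∈ univ.filter (fun f : Flg (k+1) => utop f) := by
    intro p hp
    rcases Finset.mem_filter.1 hp with ⟨_, hu, _⟩
    exact Finset.mem_filter.2 ⟨Finset.mem_univ _, hu⟩
  have hfib : ∀ f ∈ univ.filter (fun f : Flg (k+1) => utop f),
      ((Pset lam).filter (fun p => p.1 = f)).card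
        = (univ.filter (fun j : Fin (k+1) => AltP (lab lam f) (univ.erase j))).card := by
    intro f hf
    rcases Finset.mem_filter.1 hf with ⟨_, hu⟩
    refine Finset.card_bij' (fun p _ => p.2) (fun j _ => (f, j)) ?_ ?_ ?_ ?_
    · intro p hp
      rcases Finset.mem_filter.1 hp with ⟨hp1, hp2⟩
      rcases Finset.mem_filter.1 hp1 with ⟨_, _, hA⟩
      refine Finset.mem_filter.2 ⟨Finset.mem_univ _, ?_⟩
      rwa [hp2] at hA
    · intro j hj
      rcases Finset.mem_filter.1 hj with ⟨_, hA⟩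
      exact Finset.mem_filter.2 ⟨Finset.mem_filter.2 ⟨Finset.mem_univ _, hu, hA⟩, rfl⟩
    · intro p hp
      rcases Finset.mem_filter.1 hp with ⟨_, hp2⟩
      subst hp2; rfl
    · intro j _; rfl
  have hterm : ∀ f ∈ univ.filter (fun f : Flg (k+1) => utop f),
      (univ.filter (fun j : Fin (k+1) => AltP (lab lam f) (univ.erase j))).card % 2
        = if (AltP (lab lam f) univ ∨ AltM (lab lam f) univ) then 1 else 0 := by
    intro f _
    exact Dplus (Nat.succ_ne_zero k) (lab lam f) (lab_ne_zero hne f) (lab_mg_eq hcomp f)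
  have hrooms : (univ.filter (fun f : Flg (k+1) =>
      utop f ∧ (AltP (lab lam f) univ ∨ AltM (lab lam f) univ))).card
      = ∑ f ∈ univ.filter (fun f : Flg (k+1) => utop f),
          (if (AltP (lab lam f) univ ∨ AltM (lab lam f) univ) then 1 else 0) := by
    rw [← Finset.filter_filter, Finset.card_filter]
  have main : (∑ f ∈ univ.filter (fun f : Flg (k+1) => utop f),
      (if (AltP (lab lam f) univ ∨ AltM (lab lam f) univ) then 1 else 0)) % 2
      = (∑ f ∈ univ.filter (fun f : Flg (k+1) => utop f),
      (univ.filter (fun j : Fin (k+1) => AltP (lab lam f) (univ.erase j))).card) % 2 := by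
    rw [Finset.sum_nat_mod, Finset.sum_nat_mod _ 2
      (fun f => (univ.filter (fun j : Fin (k+1) => AltP (lab lam f) (univ.erase j))).card)]
    congr 1
    refine Finset.sum_congr rfl ?_
    intro f hf
    rw [hterm f hf]
    split_ifs <;> rfl
  rw [hrooms, Finset.card_eq_sum_card_fiberwise hmap, Finset.sum_congr rfl hfib, main]


/-! ### The involution on incidence pairs -/

theorem swap_le_iff {k : ℕ} (j : Fin (k+1)) (hj : j ≠ Fin.last k) (t : Fin (k+1)) (ht : t ≠ j)
    (w : Fin (k+1)) : Equiv.swap j ((j.castPred hj).succ) w ≤ t ↔ w ≤ t := by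
  have hj1 : (((j.castPred hj).succ : Fin (k+1)) : ℕ) = (j : ℕ) + 1 := by simp
  have htj : (t : ℕ) ≠ (j : ℕ) := fun h => ht (Fin.ext h)
  rcases eq_or_ne w j with rfl | hwj
  · rw [Equiv.swap_apply_left, Fin.le_def, Fin.le_def, hj1]
    omega
  rcases eq_or_ne w ((j.castPred hj).succ) with rfl | hwj1
  · rw [Equiv.swap_apply_right, Fin.le_def, Fin.le_def, hj1]
    omega
  · rw [Equiv.swap_apply_of_ne_of_ne hwj hwj1]

theorem vert_swapF {k : ℕ} (e : Fin (k+1) ≃ Fin (k+1)) (σ : Fin (k+1) → Bool)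
    (j : Fin (k+1)) (hj : j ≠ Fin.last k) (t : Fin (k+1)) (ht : t ≠ j) :
    vert (((Equiv.swap j ((j.castPred hj).succ)).trans e,
      σ ∘ (Equiv.swap j ((j.castPred hj).succ))) : Flg (k+1)) t = vert (e, σ) t := by
  funext i
  have hsymm : ((Equiv.swap j ((j.castPred hj).succ)).trans e).symm i
      = Equiv.swap j ((j.castPred hj).succ) (e.symm i) := by
    rw [Equiv.symm_trans_apply, Equiv.symm_swap]
  simp only [vert, hsymm, Function.comp_apply, Equiv.swap_apply_self]
  simp only [swap_le_iff j hj t ht]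

theorem vert_updateF {k : ℕ} (e : Fin (k+1) ≃ Fin (k+1)) (σ : Fin (k+1) → Bool) (b : Bool)
    (t : Fin (k+1)) (ht : t ≠ Fin.last k) :
    vert ((e, Function.update σ (Fin.last k) b) : Flg (k+1)) t = vert (e, σ) t := by
  funext i
  unfold vert
  rcases eq_or_ne (e.symm i) (Fin.last k) with hlast | hlast
  · simp only [hlast]
    have hnle : ¬ ((Fin.last k) ≤ t) := by
      intro h; exact ht (le_antisymm (Fin.le_last t) h)
    rw [if_neg hnle, if_neg hnle]
  · simp only [Function.update_of_ne hlast]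

theorem utop_swapF {k : ℕ} (e : Fin (k+1) ≃ Fin (k+1)) (σ : Fin (k+1) → Bool)
    (j : Fin (k+1)) (hj : j ≠ Fin.last k) :
    utop (((Equiv.swap j ((j.castPred hj).succ)).trans e,
      σ ∘ (Equiv.swap j ((j.castPred hj).succ))) : Flg (k+1)) ↔ utop (e, σ) := by
  unfold utop
  have hsymm : ((Equiv.swap j ((j.castPred hj).succ)).trans e).symm (Fin.last k)
      = Equiv.swap j ((j.castPred hj).succ) (e.symm (Fin.last k)) := by
    rw [Equiv.symm_trans_apply, Equiv.symm_swap]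
  rw [hsymm]
  simp [Equiv.swap_apply_self]

theorem utop_updateF {k : ℕ} (e : Fin (k+1) ≃ Fin (k+1)) (σ : Fin (k+1) → Bool) (b : Bool)
    (he : e (Fin.last k) ≠ Fin.last k) :
    utop ((e, Function.update σ (Fin.last k) b) : Flg (k+1)) ↔ utop (e, σ) := by
  unfold utop
  have hsymm : e.symm (Fin.last k) ≠ Fin.last k := by
    intro h
    have := congrArg e h
    rw [Equiv.apply_symm_apply] at this
    exact he this.symm
  show Function.update σ (Fin.last k) b (e.symm (Fin.last k)) = true ↔ σ (e.symm (Fin.last k)) = true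
  rw [Function.update_of_ne hsymm]

def iota {k : ℕ} (p : Flg (k+1) × Fin (k+1)) : Flg (k+1) × Fin (k+1) :=
  if hj : p.2 = Fin.last k then
    (if p.1.1 (Fin.last k) = Fin.last k then p
     else ((p.1.1, Function.update p.1.2 (Fin.last k) (! p.1.2 (Fin.last k))), p.2))
  else
    (((Equiv.swap p.2 ((p.2.castPred hj).succ)).trans p.1.1,
      p.1.2 ∘ (Equiv.swap p.2 ((p.2.castPred hj).succ))), p.2)

noncomputable def Bdset {k : ℕ} (lam : (Fin (k+1) → SignType) → ℤ) :
    Finset (Flg (k+1) × Fin (k+1)) :=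
  (Pset lam).filter (fun p => p.2 = Fin.last k ∧ p.1.1 (Fin.last k) = Fin.last k)

theorem Pset_parity {k : ℕ} (lam : (Fin (k+1) → SignType) → ℤ) :
    (Pset lam).card % 2 = (Bdset lam).card % 2 := by
  classical
  have hsub : Bdset lam ⊆ Pset lam := Finset.filter_subset _ _
  have hEv : Even ((Pset lam \ Bdset lam).card) := by
    refine even_card_of_invol _ iota ?_ ?_ ?_
    · -- maps into itself
      rintro ⟨⟨e, σ⟩, j⟩ hp
      rcases Finset.mem_sdiff.1 hp with ⟨hpP, hpB⟩
      rcases Finset.mem_filter.1 hpP with ⟨_, hu, hA⟩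
      rw [Finset.mem_sdiff]
      by_cases hj : j = Fin.last k
      · subst hj
        have he : ¬ (e (Fin.last k) = Fin.last k) := by
          intro h
          exact hpB (Finset.mem_filter.2 ⟨hpP, rfl, h⟩)
        have hio : iota ((⟨e, σ⟩ : Flg (k+1)), Fin.last k)
            = ((e, Function.update σ (Fin.last k) (! σ (Fin.last k))), Fin.last k) := by
          unfold iota
          rw [dif_pos rfl, if_neg he]
        rw [hio]
        constructor
        · refine Finset.mem_filter.2 ⟨Finset.mem_univ _, ?_, ?_⟩
          · exact (utop_updateF e σ _ he).2 hu
          · refine (AltP_congr ?_).2 hA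
            intro t htmem
            have ht : t ≠ Fin.last k := (Finset.mem_erase.1 htmem).1
            unfold lab
            rw [vert_updateF e σ _ t ht]
        · intro hcon
          rcases Finset.mem_filter.1 hcon with ⟨_, _, hcon2⟩
          exact he hcon2
      · have hio : iota ((⟨e, σ⟩ : Flg (k+1)), j)
            = (((Equiv.swap j ((j.castPred hj).succ)).trans e,
              σ ∘ (Equiv.swap j ((j.castPred hj).succ))), j) := by
          unfold iota
          rw [dif_neg hj]
        rw [hio]
        constructor
        · refine Finset.mem_filter.2 ⟨Finset.mem_univ _, ?_, ?_⟩
          · exact (utop_swapF e σ j hj).2 hu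
          · refine (AltP_congr ?_).2 hA
            intro t htmem
            have ht : t ≠ j := (Finset.mem_erase.1 htmem).1
            unfold lab
            rw [vert_swapF e σ j hj t ht]
        · intro hcon
          rcases Finset.mem_filter.1 hcon with ⟨_, hcon1, _⟩
          exact hj hcon1
    · -- involution
      rintro ⟨⟨e, σ⟩, j⟩ hp
      rcases Finset.mem_sdiff.1 hp with ⟨hpP, hpB⟩
      by_cases hj : j = Fin.last k
      · subst hj
        have he : ¬ (e (Fin.last k) = Fin.last k) := by
          intro h
          exact hpB (Finset.mem_filter.2 ⟨hpP, rfl, h⟩)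
        have hio : iota ((⟨e, σ⟩ : Flg (k+1)), Fin.last k)
            = ((e, Function.update σ (Fin.last k) (! σ (Fin.last k))), Fin.last k) := by
          unfold iota
          rw [dif_pos rfl, if_neg he]
        rw [hio]
        unfold iota
        rw [dif_pos rfl, if_neg he]
        refine Prod.ext (Prod.ext rfl ?_) rfl
        show Function.update (Function.update σ (Fin.last k) (! σ (Fin.last k))) (Fin.last k)
          (! (Function.update σ (Fin.last k) (! σ (Fin.last k)) (Fin.last k))) = σ
        rw [Function.update_self, Bool.not_not, Function.update_idem, Function.update_eq_self]
      · have hio : iota ((⟨e, σ⟩ : Flg (k+1)), j)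
            = (((Equiv.swap j ((j.castPred hj).succ)).trans e,
              σ ∘ (Equiv.swap j ((j.castPred hj).succ))), j) := by
          unfold iota
          rw [dif_neg hj]
        rw [hio]
        unfold iota
        rw [dif_neg hj]
        refine Prod.ext (Prod.ext ?_ ?_) rfl
        · show (Equiv.swap j ((j.castPred hj).succ)).trans
            ((Equiv.swap j ((j.castPred hj).succ)).trans e) = e
          rw [← Equiv.trans_assoc, Equiv.swap_swap, Equiv.refl_trans]
        · show (σ ∘ (Equiv.swap j ((j.castPred hj).succ))) ∘ (Equiv.swap j ((j.castPred hj).succ)) = σ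
          funext w
          simp [Equiv.swap_apply_self]
    · -- no fixed points
      rintro ⟨⟨e, σ⟩, j⟩ hp
      rcases Finset.mem_sdiff.1 hp with ⟨hpP, hpB⟩
      by_cases hj : j = Fin.last k
      · subst hj
        have he : ¬ (e (Fin.last k) = Fin.last k) := by
          intro h
          exact hpB (Finset.mem_filter.2 ⟨hpP, rfl, h⟩)
        have hio : iota ((⟨e, σ⟩ : Flg (k+1)), Fin.last k)
            = ((e, Function.update σ (Fin.last k) (! σ (Fin.last k))), Fin.last k) := by
          unfold iota
          rw [dif_pos rfl, if_neg he]
        rw [hio]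
        intro hcon
        have := congrArg (fun q => q.1.2 (Fin.last k)) hcon
        simp only [Function.update_self] at this
        exact Bool.not_ne_self _ this
      · have hio : iota ((⟨e, σ⟩ : Flg (k+1)), j)
            = (((Equiv.swap j ((j.castPred hj).succ)).trans e,
              σ ∘ (Equiv.swap j ((j.castPred hj).succ))), j) := by
          unfold iota
          rw [dif_neg hj]
        rw [hio]
        intro hcon
        have := congrArg (fun q => q.1.1 j) hcon
        simp only [Equiv.trans_apply] at this
        have h2 := e.injective this
        rw [Equiv.swap_apply_left] at h2
        have : ((j.castPred hj).succ : Fin (k+1)) = j := h2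
        have hv : (((j.castPred hj).succ : Fin (k+1)) : ℕ) = (j : ℕ) + 1 := by simp
        rw [this] at hv
        omega
  have hsplit : (Pset lam).card = (Bdset lam).card + (Pset lam \ Bdset lam).card := by
    rw [Finset.card_sdiff_of_subset hsub]
    have := Finset.card_le_card hsub
    omega
  rcases hEv with ⟨r, hr⟩
  omega


/-! ### The boundary bijection -/

def extPerm {k : ℕ} (e₀ : Fin k ≃ Fin k) : Fin (k+1) ≃ Fin (k+1) where
  toFun := Fin.lastCases (Fin.last k) (fun t => (e₀ t).castSucc)
  invFun := Fin.lastCases (Fin.last k) (fun t => (e₀.symm t).castSucc)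
  left_inv := by
    intro i
    induction i using Fin.lastCases with
    | last => simp
    | cast t => simp
  right_inv := by
    intro i
    induction i using Fin.lastCases with
    | last => simp
    | cast t => simp

theorem extPerm_last {k : ℕ} (e₀ : Fin k ≃ Fin k) : extPerm e₀ (Fin.last k) = Fin.last k := by
  simp [extPerm]

theorem extPerm_castSucc {k : ℕ} (e₀ : Fin k ≃ Fin k) (t : Fin k) :
    extPerm e₀ t.castSucc = (e₀ t).castSucc := by
  simp [extPerm]

theorem extPerm_symm_last {k : ℕ} (e₀ : Fin k ≃ Fin k) :
    (extPerm e₀).symm (Fin.last k) = Fin.last k := by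
  rw [Equiv.symm_apply_eq, extPerm_last]

theorem extPerm_symm_castSucc {k : ℕ} (e₀ : Fin k ≃ Fin k) (i₀ : Fin k) :
    (extPerm e₀).symm i₀.castSucc = (e₀.symm i₀).castSucc := by
  rw [Equiv.symm_apply_eq, extPerm_castSucc, Equiv.apply_symm_apply]

def extFlag {k : ℕ} (f₀ : Flg k) : Flg (k+1) := (extPerm f₀.1, Fin.snoc f₀.2 true)

theorem vert_extFlag {k : ℕ} (f₀ : Flg k) (t : Fin k) :
    vert (extFlag f₀) t.castSucc = Fin.snoc (vert f₀ t) (0 : SignType) := by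
  funext i
  induction i using Fin.lastCases with
  | last =>
    have hnle : ¬ ((Fin.last k) ≤ t.castSucc) := fun h =>
      absurd (lt_of_le_of_lt h (Fin.castSucc_lt_last t)) (lt_irrefl _)
    have h1 : (extFlag f₀).1.symm (Fin.last k) = Fin.last k := extPerm_symm_last f₀.1
    simp only [vert, h1]
    rw [if_neg hnle, Fin.snoc_last]
  | cast i₀ =>
    have h1 : (extFlag f₀).1.symm i₀.castSucc = (f₀.1.symm i₀).castSucc :=
      extPerm_symm_castSucc f₀.1 i₀
    have h2 : (extFlag f₀).2 ((f₀.1.symm i₀).castSucc) = f₀.2 (f₀.1.symm i₀) := by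
      simp only [extFlag]
      exact Fin.snoc_castSucc (α := fun _ => Bool) true f₀.2 (f₀.1.symm i₀)
    simp only [vert, h1, h2, Fin.castSucc_le_castSucc_iff]
    rw [Fin.snoc_castSucc]
    rfl

theorem lab_extFlag {k : ℕ} (lam : (Fin (k+1) → SignType) → ℤ) (f₀ : Flg k) (t : Fin k) :
    lab lam (extFlag f₀) t.castSucc = lab (fun x => lam (Fin.snoc x 0)) f₀ t := by
  unfold lab
  rw [vert_extFlag]

theorem erase_last_eq_image {k : ℕ} :
    (univ : Finset (Fin (k+1))).erase (Fin.last k) = univ.image Fin.castSucc := by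
  ext i
  simp only [Finset.mem_erase, Finset.mem_univ, and_true, Finset.mem_image, true_and]
  exact Fin.exists_castSucc_eq.symm

theorem card_Bdset {k : ℕ} (lam : (Fin (k+1) → SignType) → ℤ) :
    (Bdset lam).card = Np k (fun x => lam (Fin.snoc x 0)) := by
  classical
  rw [Np]
  refine (Finset.card_bij
    (fun (f₀ : Flg k) (_ : f₀ ∈ univ.filter (fun f₀ : Flg k =>
        AltP (lab (fun x => lam (Fin.snoc x 0)) f₀) univ))
      => ((extFlag f₀, Fin.last k) : Flg (k+1) × Fin (k+1))) ?_ ?_ ?_).symm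
  · -- maps into Bdset
    intro f₀ hf₀
    rcases Finset.mem_filter.1 hf₀ with ⟨_, hA⟩
    have hutop : utop (extFlag f₀) := by
      unfold utop
      rw [show (extFlag f₀).1.symm (Fin.last k) = Fin.last k from extPerm_symm_last f₀.1]
      simp only [extFlag]
      exact Fin.snoc_last (α := fun _ => Bool) true f₀.2
    have hAe : AltP (lab lam (extFlag f₀)) ((univ : Finset (Fin (k+1))).erase (Fin.last k)) := by
      rw [erase_last_eq_image]
      exact (AltP_image Fin.castSucc (Fin.castSucc_injective k)
        (lab (fun x => lam (Fin.snoc x 0)) f₀) (lab lam (extFlag f₀))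
        (fun t => lab_extFlag lam f₀ t) univ).2 hA
    refine Finset.mem_filter.2 ⟨Finset.mem_filter.2 ⟨Finset.mem_univ _, hutop, hAe⟩, rfl, ?_⟩
    exact extPerm_last f₀.1
  · -- injective
    intro f₀ hf₀ g₀ hg₀ heq
    have h1 : extFlag f₀ = extFlag g₀ := congrArg Prod.fst heq
    have he : f₀.1 = g₀.1 := by
      apply Equiv.ext
      intro t
      apply Fin.castSucc_injective
      rw [← extPerm_castSucc f₀.1 t, ← extPerm_castSucc g₀.1 t]
      exact congrFun (congrArg (fun q : Flg (k+1) => (q.1 : Fin (k+1) → Fin (k+1))) h1) t.castSucc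
    have hσ : f₀.2 = g₀.2 := by
      funext t
      have h3 := congrFun (congrArg Prod.snd h1) t.castSucc
      exact (Fin.snoc_castSucc (α := fun _ => Bool) true f₀.2 t).symm.trans
        (h3.trans (Fin.snoc_castSucc (α := fun _ => Bool) true g₀.2 t))
    exact Prod.ext he hσ
  · -- surjective
    rintro ⟨⟨e, σ⟩, j⟩ hp
    rcases Finset.mem_filter.1 hp with ⟨hpP, hj, he⟩
    rcases Finset.mem_filter.1 hpP with ⟨_, hu, hA⟩
    have hsymmlast : e.symm (Fin.last k) = Fin.last k := by
      have h := congrArg e.symm he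
      rw [Equiv.symm_apply_apply] at h
      exact h.symm
    have hne1 : ∀ t : Fin k, e t.castSucc ≠ Fin.last k := by
      intro t h
      have := congrArg e.symm h
      rw [Equiv.symm_apply_apply, hsymmlast] at this
      exact absurd this (Fin.castSucc_lt_last t).ne
    have hne2 : ∀ t : Fin k, e.symm t.castSucc ≠ Fin.last k := by
      intro t h
      have := congrArg e h
      rw [Equiv.apply_symm_apply, he] at this
      exact absurd this (Fin.castSucc_lt_last t).ne
    set e₀ : Fin k ≃ Fin k :=
      { toFun := fun t => (e t.castSucc).castPred (hne1 t)
        invFun := fun t => (e.symm t.castSucc).castPred (hne2 t)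
        left_inv := by
          intro t
          apply Fin.castSucc_injective
          rw [Fin.castSucc_castPred, Fin.castSucc_castPred, Equiv.symm_apply_apply]
        right_inv := by
          intro t
          apply Fin.castSucc_injective
          rw [Fin.castSucc_castPred, Fin.castSucc_castPred, Equiv.apply_symm_apply] } with he₀
    have hext : extFlag ((e₀, σ ∘ Fin.castSucc) : Flg k) = ((e, σ) : Flg (k+1)) := by
      have hσlast : σ (Fin.last k) = true := by
        have := hu
        unfold utop at this
        rwa [show ((e, σ) : Flg (k+1)).1.symm (Fin.last k) = Fin.last k from hsymmlast] at this
      refine Prod.ext ?_ ?_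
      · show extPerm e₀ = e
        apply Equiv.ext
        intro i
        induction i using Fin.lastCases with
        | last => rw [extPerm_last, he]
        | cast t =>
          rw [extPerm_castSucc]
          show ((e t.castSucc).castPred (hne1 t)).castSucc = e t.castSucc
          rw [Fin.castSucc_castPred]
      · show Fin.snoc (σ ∘ Fin.castSucc) true = σ
        funext i
        induction i using Fin.lastCases with
        | last => simp [Fin.snoc_last, hσlast]
        | cast t => simp [Fin.snoc_castSucc]
    refine ⟨((e₀, σ ∘ Fin.castSucc) : Flg k), ?_, ?_⟩
    · refine Finset.mem_filter.2 ⟨Finset.mem_univ _, ?_⟩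
      have hA' : AltP (lab lam (extFlag ((e₀, σ ∘ Fin.castSucc) : Flg k)))
          ((univ : Finset (Fin k)).image Fin.castSucc) := by
        rw [← erase_last_eq_image, hext]
        rw [hj] at hA
        exact hA
      exact (AltP_image Fin.castSucc (Fin.castSucc_injective k)
        (lab (fun x => lam (Fin.snoc x 0)) ((e₀, σ ∘ Fin.castSucc) : Flg k))
        (lab lam (extFlag ((e₀, σ ∘ Fin.castSucc) : Flg k)))
        (fun t => lab_extFlag lam _ t) univ).1 hA'
    · exact Prod.ext hext hj.symm


/-! ### Fan's theorem and the octahedral Tucker lemma -/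

theorem fan : ∀ (k : ℕ) (lam : (Fin k → SignType) → ℤ),
    (∀ x, x ≠ 0 → lam x ≠ 0) →
    (∀ x, x ≠ 0 → lam (-x) = - lam x) →
    (∀ x y, x ≠ 0 → below x y → lam x ≠ - lam y) →
    Np k lam % 2 = 1 := by
  intro k
  induction k with
  | zero =>
    intro lam _ _ _
    have hall : ∀ f : Flg 0, AltP (lab lam f) univ := by
      intro f
      exact ⟨fun i _ _ _ _ => i.elim0, fun i _ => i.elim0⟩
    rw [Np, Finset.filter_true_of_mem (fun f _ => hall f), Finset.card_univ]
    have h1 : Fintype.card (Flg 0) = 1 := by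
      simp [Fintype.card_prod, Fintype.card_perm]
    rw [h1]
  | succ k ih =>
    intro lam hne hanti hcomp
    have hsnoc_ne : ∀ x : Fin k → SignType, x ≠ 0 →
        (Fin.snoc x 0 : Fin (k+1) → SignType) ≠ 0 := by
      intro x hx h
      apply hx
      funext i
      have := congrFun h i.castSucc
      rw [Fin.snoc_castSucc] at this
      simpa using this
    have hsnoc_neg : ∀ x : Fin k → SignType,
        (Fin.snoc (-x) 0 : Fin (k+1) → SignType) = - (Fin.snoc x 0) := by
      intro x
      funext i
      induction i using Fin.lastCases with
      | last => simp
      | cast t => simp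
    have hbelow' : ∀ x y : Fin k → SignType, below x y →
        below (Fin.snoc x 0 : Fin (k+1) → SignType) (Fin.snoc y 0) := by
      intro x y hxy i
      induction i using Fin.lastCases with
      | last => left; simp
      | cast t =>
        rcases hxy t with h | h
        · left; simp [h]
        · right; rw [Fin.snoc_castSucc, Fin.snoc_castSucc, h]
    have IH := ih (fun x => lam (Fin.snoc x 0))
      (fun x hx => hne _ (hsnoc_ne x hx))
      (fun x hx => by
        show lam (Fin.snoc (-x) 0) = - lam (Fin.snoc x 0)
        rw [hsnoc_neg x, hanti _ (hsnoc_ne x hx)])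
      (fun x y hx hxy => hcomp _ _ (hsnoc_ne x hx) (hbelow' x y hxy))
    calc Np (k+1) lam % 2
        = (univ.filter (fun f : Flg (k+1) =>
            utop f ∧ (AltP (lab lam f) univ ∨ AltM (lab lam f) univ))).card % 2 := by
          rw [Np_eq_rooms lam hne hanti]
      _ = (Pset lam).card % 2 := rooms_parity lam hne hcomp
      _ = (Bdset lam).card % 2 := Pset_parity lam
      _ = Np k (fun x => lam (Fin.snoc x 0)) % 2 := by rw [card_Bdset]
      _ = 1 := IH

theorem octTucker (m M : ℕ) (lam : (Fin m → SignType) → ℤ)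
    (hne : ∀ x, x ≠ 0 → lam x ≠ 0)
    (hanti : ∀ x, x ≠ 0 → lam (-x) = - lam x)
    (hcomp : ∀ x y, x ≠ 0 → below x y → lam x ≠ - lam y)
    (hbd : ∀ x, x ≠ 0 → (lam x).natAbs ≤ M) : m ≤ M := by
  have h := fan m lam hne hanti hcomp
  have hpos : (univ.filter (fun f : Flg m => AltP (lab lam f) univ)).Nonempty := by
    rw [← Finset.card_pos]
    change 0 < Np m lam
    omega
  obtain ⟨f, hf⟩ := hpos
  have hA := (Finset.mem_filter.1 hf).2
  have himg : (univ.image (mg (lab lam f))).card = m := by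
    rw [Finset.card_image_of_injOn (fun i hi j hj hm => hA.1 i hi j hj hm),
      Finset.card_univ, Fintype.card_fin]
  have hsub : (univ.image (mg (lab lam f))) ⊆ Finset.Icc 1 M := by
    intro v hv
    rcases Finset.mem_image.1 hv with ⟨i, _, rfl⟩
    have h1 : lab lam f i ≠ 0 := lab_ne_zero hne f i
    have h2 : (lab lam f i).natAbs ≤ M := hbd _ (vert_ne_zero f i)
    rw [Finset.mem_Icc]
    have h3 := Int.natAbs_pos.2 h1
    exact ⟨h3, h2⟩
  have hle := Finset.card_le_card hsub
  rw [himg, Nat.card_Icc] at hle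
  omega


/-! ### Runs of boolean lists -/

def runsF (b : Bool) : List Bool → ℕ
  | [] => 0
  | a :: l => (if a = b then 0 else 1) + runsF a l

def runs : List Bool → ℕ
  | [] => 0
  | a :: l => 1 + runsF a l

theorem runs_eq_runsF (a : Bool) (l : List Bool) : runs (a :: l) = runsF (!a) (a :: l) := by
  show 1 + runsF a l = (if a = !a then 0 else 1) + runsF a l
  rw [if_neg (by cases a <;> simp)]

theorem runsF_le_step (a b : Bool) (l : List Bool) :
    runsF b l ≤ (if a = b then 0 else 1) + runsF a l := by
  cases l with
  | nil => simp [runsF]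
  | cons c t =>
    show (if c = b then 0 else 1) + runsF c t ≤ (if a = b then 0 else 1) + ((if c = a then 0 else 1) + runsF c t)
    cases a <;> cases b <;> cases c <;> (simp; try omega)

theorem runsF_sublist {l₁ l₂ : List Bool} (h : l₁.Sublist l₂) :
    ∀ b, runsF b l₁ ≤ runsF b l₂ := by
  induction h with
  | slnil => intro b; exact le_refl _
  | cons a h ih =>
    intro b
    calc runsF b _ ≤ runsF b _ := ih b
      _ ≤ (if a = b then 0 else 1) + runsF a _ := runsF_le_step a b _
  | cons_cons a h ih =>
    intro b
    show (if a = b then 0 else 1) + runsF a _ ≤ (if a = b then 0 else 1) + runsF a _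
    exact Nat.add_le_add_left (ih a) _

theorem runsF_le_runs (b : Bool) (l : List Bool) : runsF b l ≤ runs l := by
  cases l with
  | nil => exact le_refl _
  | cons c t =>
    show (if c = b then 0 else 1) + runsF c t ≤ 1 + runsF c t
    have : (if c = b then 0 else 1) ≤ 1 := by split_ifs <;> omega
    omega

theorem runs_sublist {l₁ l₂ : List Bool} (h : l₁.Sublist l₂) : runs l₁ ≤ runs l₂ := by
  cases l₁ with
  | nil => exact Nat.zero_le _
  | cons a t₁ =>
    rw [runs_eq_runsF]
    calc runsF (!a) (a :: t₁) ≤ runsF (!a) l₂ := runsF_sublist h (!a)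
      _ ≤ runs l₂ := runsF_le_runs _ _

theorem runs_lt_of_head_ne {l₁ l₂ : List Bool} (h : l₁.Sublist l₂) (h₁ h₂ : Bool)
    (hh₁ : l₁.head? = some h₁) (hh₂ : l₂.head? = some h₂) (hne : h₁ ≠ h₂) :
    runs l₁ < runs l₂ := by
  cases l₁ with
  | nil => simp at hh₁
  | cons a t₁ =>
    cases l₂ with
    | nil => simp at hh₂
    | cons c t₂ =>
      simp only [List.head?_cons, Option.some_inj] at hh₁ hh₂
      subst hh₁; subst hh₂
      have hnot : (!a) = c := by cases a <;> cases c <;> simp_all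
      have e1 : runs (a :: t₁) = runsF c (a :: t₁) := by rw [runs_eq_runsF, hnot]
      have e2 : runsF c (c :: t₂) = runsF c t₂ := by
        show (if c = c then 0 else 1) + runsF c t₂ = runsF c t₂
        simp
      have e3 : runs (c :: t₂) = 1 + runsF c t₂ := rfl
      have e4 := runsF_sublist h c
      omega

theorem runsF_le_counts : ∀ (l : List Bool) (b : Bool),
    runsF b l ≤ 2 * l.count (!b) ∧ runsF b l ≤ 2 * l.count b + 1 := by
  intro l
  induction l with
  | nil => intro b; simp [runsF]
  | cons a t ih =>
    intro b
    rcases ih b with ⟨ih1, ih2⟩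
    rcases ih (!b) with ⟨ih3, ih4⟩
    by_cases hab : a = b
    · subst hab
      constructor
      · show (if a = a then 0 else 1) + runsF a t ≤ 2 * ((a :: t).count (!a))
        rw [if_pos rfl]
        have hc : (a :: t).count (!a) = t.count (!a) := by
          rw [List.count_cons]
          simp [Bool.eq_not_self]
        omega
      · show (if a = a then 0 else 1) + runsF a t ≤ 2 * ((a :: t).count a) + 1
        rw [if_pos rfl]
        have hc : (a :: t).count a = t.count a + 1 := by
          rw [List.count_cons]
          simp
        omega
    · have hab' : a = !b := by cases a <;> cases b <;> simp_all
      subst hab'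
      constructor
      · show (if (!b) = b then 0 else 1) + runsF (!b) t ≤ 2 * (((!b) :: t).count (!b))
        rw [if_neg (by cases b <;> simp)]
        have hc : ((!b) :: t).count (!b) = t.count (!b) + 1 := by
          rw [List.count_cons]; simp
        omega
      · show (if (!b) = b then 0 else 1) + runsF (!b) t ≤ 2 * (((!b) :: t).count b) + 1
        rw [if_neg (by cases b <;> simp)]
        have hc : ((!b) :: t).count b = t.count b := by
          rw [List.count_cons]
          simp [Bool.not_eq_self]
        have hb : t.count (!(!b)) = t.count b := by rw [Bool.not_not]
        omega

theorem runs_le_two_count_head (l : List Bool) (h : Bool) (hh : l.head? = some h) :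
    runs l ≤ 2 * l.count h := by
  cases l with
  | nil => simp at hh
  | cons a t =>
    simp only [List.head?_cons, Option.some_inj] at hh
    subst hh
    rw [runs_eq_runsF]
    have := (runsF_le_counts (a :: t) (!a)).1
    rwa [Bool.not_not] at this


/-! ### Application: the labelling associated to a coloring -/

section Application

variable (n s C : ℕ) (c : Finset (Fin (2 * n)) → Fin C)

def Apos (x : Fin (2 * n) → SignType) : Finset (Fin (2 * n)) :=
  univ.filter (fun i => x i = 1)

def Bneg (x : Fin (2 * n) → SignType) : Finset (Fin (2 * n)) :=
  univ.filter (fun i => x i = -1)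

def sgns (x : Fin (2 * n) → SignType) : List Bool :=
  ((List.finRange (2 * n)).filter (fun i => decide (x i ≠ 0))).map (fun i => decide (x i = 1))

def CandA (x : Fin (2 * n) → SignType) : Finset (Finset (Fin (2 * n))) :=
  (univ.powersetCard n).filter (fun S => (S \ Apos n x).card ≤ s ∧ S ∩ Bneg n x = ∅)

def CandB (x : Fin (2 * n) → SignType) : Finset (Finset (Fin (2 * n))) :=
  (univ.powersetCard n).filter (fun S => (S \ Bneg n x).card ≤ s ∧ S ∩ Apos n x = ∅)

def mcol (x : Fin (2 * n) → SignType) : ℕ :=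
  (((CandA n s x ∪ CandB n s x)).image (fun S => (c S).val)).max.getD 0

def attA (x : Fin (2 * n) → SignType) : Prop :=
  ∃ S ∈ CandA n s x, (c S).val = mcol n s C c x

def attB (x : Fin (2 * n) → SignType) : Prop :=
  ∃ S ∈ CandB n s x, (c S).val = mcol n s C c x

instance (x : Fin (2 * n) → SignType) : Decidable (attA n s C c x) := by
  unfold attA; infer_instance

noncomputable def lamK (x : Fin (2 * n) → SignType) : ℤ :=
  if runs (sgns n x) + (2 * s + 2) ≤ 2 * n then
    (if (sgns n x).head? = some true then (runs (sgns n x) : ℤ) else - (runs (sgns n x) : ℤ))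
  else
    (if attA n s C c x then ((2 * n - (2 * s + 2) + 1 + mcol n s C c x : ℕ) : ℤ)
     else - ((2 * n - (2 * s + 2) + 1 + mcol n s C c x : ℕ) : ℤ))

theorem sgns_ne_nil {x : Fin (2 * n) → SignType} (hx : x ≠ 0) : sgns n x ≠ [] := by
  have hex : ∃ i, x i ≠ 0 := by
    by_contra hcon
    push_neg at hcon
    exact hx (funext fun i => hcon i)
  obtain ⟨i, hi⟩ := hex
  have h1 : i ∈ (List.finRange (2 * n)).filter (fun i => decide (x i ≠ 0)) :=
    List.mem_filter.2 ⟨List.mem_finRange i, by simp [hi]⟩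
  exact List.ne_nil_of_mem (List.mem_map_of_mem h1)

theorem runs_sgns_pos {x : Fin (2 * n) → SignType} (hx : x ≠ 0) : 1 ≤ runs (sgns n x) := by
  rcases hl : sgns n x with _ | ⟨a, t⟩
  · exact absurd hl (sgns_ne_nil n hx)
  · show 1 ≤ 1 + runsF a t
    omega

theorem sgns_sublist {x y : Fin (2 * n) → SignType} (hxy : below x y) :
    (sgns n x).Sublist (sgns n y) := by
  unfold sgns
  have h1 : ((List.finRange (2 * n)).filter (fun i => decide (x i ≠ 0))).Sublist
      ((List.finRange (2 * n)).filter (fun i => decide (y i ≠ 0))) := by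
    apply List.monotone_filter_right
    intro i hi
    rcases hxy i with h | h
    · exact absurd h (of_decide_eq_true hi)
    · simp only [decide_eq_true_eq] at hi ⊢
      rwa [← h]
  have h2 : ((List.finRange (2 * n)).filter (fun i => decide (x i ≠ 0))).map
        (fun i => decide (x i = 1))
      = ((List.finRange (2 * n)).filter (fun i => decide (x i ≠ 0))).map
        (fun i => decide (y i = 1)) := by
    apply List.map_congr_left
    intro i hi
    rcases List.mem_filter.1 hi with ⟨_, hp⟩
    rcases hxy i with h | h
    · exact absurd h (of_decide_eq_true hp)
    · rw [h]
  rw [h2]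
  exact List.Sublist.map _ h1

theorem sgns_neg (x : Fin (2 * n) → SignType) : sgns n (-x) = (sgns n x).map (! ·) := by
  unfold sgns
  rw [List.map_map]
  have h1 : (fun i => decide ((-x) i ≠ 0)) = (fun i : Fin (2 * n) => decide (x i ≠ 0)) := by
    funext i
    rcases hx : x i with _ | _ | _ <;> simp [Pi.neg_apply, hx]
  rw [h1]
  apply List.map_congr_left
  intro i hi
  rcases List.mem_filter.1 hi with ⟨_, hp⟩
  have hne : x i ≠ 0 := of_decide_eq_true hp
  rcases hx : x i with _ | _ | _
  · exact absurd hx hne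
  · simp [Pi.neg_apply, hx]
  · simp [Pi.neg_apply, hx]

theorem runsF_map_not : ∀ (l : List Bool) (b : Bool),
    runsF (!b) (l.map (! ·)) = runsF b l := by
  intro l
  induction l with
  | nil => intro b; rfl
  | cons a t ih =>
    intro b
    show (if (!a) = (!b) then 0 else 1) + runsF (!a) (t.map (! ·)) = (if a = b then 0 else 1) + runsF a t
    rw [ih a]
    congr 1
    cases a <;> cases b <;> simp

theorem runs_map_not (l : List Bool) : runs (l.map (! ·)) = runs l := by
  cases l with
  | nil => rfl
  | cons a t =>
    show 1 + runsF (!a) (t.map (! ·)) = 1 + runsF a t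
    rw [runsF_map_not t a]

end Application


section Application2

variable (n s C : ℕ) (c : Finset (Fin (2 * n)) → Fin C)

theorem countP_le_card_filter {α : Type*} [Fintype α] [DecidableEq α] (l : List α) (hnd : l.Nodup)
    (p : α → Bool) (P : α → Prop) [DecidablePred P] (h : ∀ a ∈ l, p a = true → P a) :
    l.countP p ≤ (univ.filter P).card := by
  rw [List.countP_eq_length_filter]
  have hnd2 : (l.filter p).Nodup := hnd.filter _
  rw [← List.toFinset_card_of_nodup hnd2]
  apply Finset.card_le_card
  intro a ha
  rw [List.mem_toFinset] at ha
  rcases List.mem_filter.1 ha with ⟨hmem, hp⟩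
  exact Finset.mem_filter.2 ⟨Finset.mem_univ _, h a hmem hp⟩

theorem count_true_le (x : Fin (2 * n) → SignType) :
    (sgns n x).count true ≤ (Apos n x).card := by
  show List.countP (· == true) (sgns n x) ≤ _
  unfold sgns
  rw [List.countP_map]
  unfold Apos
  apply countP_le_card_filter _ ((List.nodup_finRange _).filter _)
  intro a _ hp
  simp only [Function.comp_apply, beq_iff_eq, decide_eq_true_eq] at hp
  exact hp

theorem count_false_le (x : Fin (2 * n) → SignType) :
    (sgns n x).count false ≤ (Bneg n x).card := by
  show List.countP (· == false) (sgns n x) ≤ _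
  unfold sgns
  rw [List.countP_map]
  unfold Bneg
  apply countP_le_card_filter _ ((List.nodup_finRange _).filter _)
  intro a ha hp
  rcases List.mem_filter.1 ha with ⟨_, hne⟩
  have hne' : x a ≠ 0 := of_decide_eq_true hne
  simp only [Function.comp_apply, beq_iff_eq] at hp
  have h1 : ¬ (x a = 1) := by
    intro h
    rw [decide_eq_true h] at hp
    simp at hp
  rcases hx : x a with _ | _ | _
  · exact absurd hx hne'
  · rfl
  · exact absurd hx h1

theorem apos_bneg_card (x : Fin (2 * n) → SignType) :
    (Apos n x).card + (Bneg n x).card ≤ 2 * n := by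
  have hdisj : Disjoint (Apos n x) (Bneg n x) := by
    rw [Finset.disjoint_left]
    intro i hiA hiB
    have h1 : x i = 1 := (Finset.mem_filter.1 hiA).2
    have h2 : x i = -1 := (Finset.mem_filter.1 hiB).2
    rw [h1] at h2
    exact absurd h2 (by decide)
  rw [← Finset.card_union_of_disjoint hdisj]
  calc (Apos n x ∪ Bneg n x).card ≤ (univ : Finset (Fin (2 * n))).card :=
        Finset.card_le_card (Finset.subset_univ _)
    _ = 2 * n := by rw [Finset.card_univ, Fintype.card_fin]

theorem apos_card_large (x : Fin (2 * n) → SignType)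
    (hhead : (sgns n x).head? = some true)
    (hruns : ¬ (runs (sgns n x) + (2 * s + 2) ≤ 2 * n)) :
    n - s ≤ (Apos n x).card := by
  have h1 := runs_le_two_count_head (sgns n x) true hhead
  have h2 := count_true_le n x
  omega

theorem bneg_card_large (x : Fin (2 * n) → SignType)
    (hhead : (sgns n x).head? = some false)
    (hruns : ¬ (runs (sgns n x) + (2 * s + 2) ≤ 2 * n)) :
    n - s ≤ (Bneg n x).card := by
  have h1 := runs_le_two_count_head (sgns n x) false hhead
  have h2 := count_false_le n x
  omega

theorem apos_neg (x : Fin (2 * n) → SignType) : Apos n (-x) = Bneg n x := by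
  unfold Apos Bneg
  apply Finset.filter_congr
  intro i _
  rcases hx : x i with _ | _ | _ <;> simp [Pi.neg_apply, hx] <;> decide

theorem bneg_neg (x : Fin (2 * n) → SignType) : Bneg n (-x) = Apos n x := by
  unfold Apos Bneg
  apply Finset.filter_congr
  intro i _
  rcases hx : x i with _ | _ | _ <;> simp [Pi.neg_apply, hx] <;> decide

theorem candA_neg (x : Fin (2 * n) → SignType) : CandA n s (-x) = CandB n s x := by
  unfold CandA CandB
  apply Finset.filter_congr
  intro S _
  rw [apos_neg, bneg_neg]

theorem candB_neg (x : Fin (2 * n) → SignType) : CandB n s (-x) = CandA n s x := by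
  unfold CandA CandB
  apply Finset.filter_congr
  intro S _
  rw [apos_neg, bneg_neg]

theorem candA_nonempty_of_big (x : Fin (2 * n) → SignType) (hs : s < n)
    (hA : n - s ≤ (Apos n x).card) (hB : (Bneg n x).card ≤ n) :
    (CandA n s x).Nonempty := by
  classical
  by_cases hc : n ≤ (Apos n x).card
  · obtain ⟨S, hS1, hS2⟩ := Finset.exists_subset_card_eq hc
    refine ⟨S, Finset.mem_filter.2 ⟨Finset.mem_powersetCard_univ.2 hS2, ?_, ?_⟩⟩
    · rw [Finset.sdiff_eq_empty_iff_subset.2 hS1]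
      simp
    · apply Finset.eq_empty_of_forall_notMem
      intro i hi
      rcases Finset.mem_inter.1 hi with ⟨hiS, hiB⟩
      have h1 : x i = 1 := (Finset.mem_filter.1 (hS1 hiS)).2
      have h2 : x i = -1 := (Finset.mem_filter.1 hiB).2
      rw [h1] at h2
      exact absurd h2 (by decide)
  · push_neg at hc
    set R := univ \ (Apos n x ∪ Bneg n x) with hRdef
    have hR : n - (Apos n x).card ≤ R.card := by
      have h1 : (Apos n x ∪ Bneg n x).card ≤ (Apos n x).card + (Bneg n x).card :=
        Finset.card_union_le _ _
      have h2 : R.card = 2 * n - (Apos n x ∪ Bneg n x).card := by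
        rw [hRdef, Finset.card_sdiff_of_subset (Finset.subset_univ _), Finset.card_univ, Fintype.card_fin]
      omega
    obtain ⟨P, hP1, hP2⟩ := Finset.exists_subset_card_eq hR
    have hdisj : Disjoint (Apos n x) P := by
      rw [Finset.disjoint_left]
      intro i hiA hiP
      have := hP1 hiP
      rw [hRdef, Finset.mem_sdiff] at this
      exact this.2 (Finset.mem_union_left _ hiA)
    refine ⟨Apos n x ∪ P, Finset.mem_filter.2 ⟨Finset.mem_powersetCard_univ.2 ?_, ?_, ?_⟩⟩
    · rw [Finset.card_union_of_disjoint hdisj, hP2]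
      omega
    · have hsub : (Apos n x ∪ P) \ Apos n x ⊆ P := by
        intro i hi
        rw [Finset.mem_sdiff] at hi
        rcases Finset.mem_union.1 hi.1 with h | h
        · exact absurd h hi.2
        · exact h
      calc ((Apos n x ∪ P) \ Apos n x).card ≤ P.card := Finset.card_le_card hsub
        _ ≤ s := by omega
    · apply Finset.eq_empty_of_forall_notMem
      intro i hi
      rcases Finset.mem_inter.1 hi with ⟨hiS, hiB⟩
      rcases Finset.mem_union.1 hiS with h | h
      · have h1 : x i = 1 := (Finset.mem_filter.1 h).2
        have h2 : x i = -1 := (Finset.mem_filter.1 hiB).2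
        rw [h1] at h2
        exact absurd h2 (by decide)
      · have := hP1 h
        rw [hRdef, Finset.mem_sdiff] at this
        exact this.2 (Finset.mem_union_right _ hiB)

theorem cands_nonempty (x : Fin (2 * n) → SignType) (hs : s < n) (hx : x ≠ 0)
    (hruns : ¬ (runs (sgns n x) + (2 * s + 2) ≤ 2 * n)) :
    (CandA n s x ∪ CandB n s x).Nonempty := by
  classical
  have hcards := apos_bneg_card n x
  have hxneg : (-x : Fin (2 * n) → SignType) ≠ 0 := by
    intro h
    apply hx
    funext i
    have := congrFun h i
    simp only [Pi.neg_apply, Pi.zero_apply] at this ⊢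
    rcases hxi : x i with _ | _ | _ <;> rw [hxi] at this <;> first | rfl | exact absurd this (by decide)
  have hsides : (n - s ≤ (Apos n x).card ∧ (Bneg n x).card ≤ n)
      ∨ (n - s ≤ (Bneg n x).card ∧ (Apos n x).card ≤ n) := by
    rcases hl : (sgns n x).head? with _ | b
    · exact absurd (List.head?_eq_none_iff.1 hl) (sgns_ne_nil n hx)
    · rcases b with _ | _
      · -- head false
        have hB := bneg_card_large n s x hl hruns
        by_cases hA : (Apos n x).card ≤ n
        · exact Or.inr ⟨hB, hA⟩
        · push_neg at hA
          exact Or.inl ⟨by omega, by omega⟩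
      · -- head true
        have hA := apos_card_large n s x hl hruns
        by_cases hB : (Bneg n x).card ≤ n
        · exact Or.inl ⟨hA, hB⟩
        · push_neg at hB
          exact Or.inr ⟨by omega, by omega⟩
  rcases hsides with ⟨h1, h2⟩ | ⟨h1, h2⟩
  · obtain ⟨S, hS⟩ := candA_nonempty_of_big n s x hs h1 h2
    exact ⟨S, Finset.mem_union_left _ hS⟩
  · have hA' : n - s ≤ (Apos n (-x)).card := by rw [apos_neg]; exact h1
    have hB' : (Bneg n (-x)).card ≤ n := by rw [bneg_neg]; exact h2
    obtain ⟨S, hS⟩ := candA_nonempty_of_big n s (-x) hs hA' hB'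
    rw [candA_neg] at hS
    exact ⟨S, Finset.mem_union_right _ hS⟩

end Application2


section Application3

variable (n s C : ℕ) (c : Finset (Fin (2 * n)) → Fin C)

theorem edge_absurd (hprop : KGProper 2 (2 * n) n s C c) (hs : s < n)
    {S₁ S₂ : Finset (Fin (2 * n))} (h1 : S₁.card = n) (h2 : S₂.card = n)
    (hint : (S₁ ∩ S₂).card ≤ s) (hcol : c S₁ = c S₂) : False := by
  have hne : S₁ ≠ S₂ := by
    intro h
    rw [h, Finset.inter_self, h2] at hint
    omega
  have hedge : KGEdge 2 (2 * n) n s {S₁, S₂} := by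
    refine ⟨Finset.card_pair hne, ?_, ?_⟩
    · intro A hA
      rcases Finset.mem_insert.1 hA with rfl | hA
      · exact h1
      · rw [Finset.mem_singleton.1 hA]
        exact h2
    · intro A hA B hB hAB
      rcases Finset.mem_insert.1 hA with rfl | hA' <;>
        rcases Finset.mem_insert.1 hB with rfl | hB'
      · exact absurd rfl hAB
      · rw [Finset.mem_singleton.1 hB']
        exact hint
      · rw [Finset.mem_singleton.1 hA', Finset.inter_comm]
        exact hint
      · rw [Finset.mem_singleton.1 hA', Finset.mem_singleton.1 hB'] at hAB
        exact absurd rfl hAB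
  exact hprop {S₁, S₂} hedge ⟨c S₁, by
    intro A hA
    rcases Finset.mem_insert.1 hA with rfl | hA
    · rfl
    · rw [Finset.mem_singleton.1 hA, hcol]⟩

theorem below_refl (x : Fin (2 * n) → SignType) : below x x := fun _ => Or.inr rfl

theorem below_neg {x y : Fin (2 * n) → SignType} (h : below x y) : below (-x) (-y) := by
  intro i
  rcases h i with h' | h'
  · left
    simp [Pi.neg_apply, h']
  · right
    simp [Pi.neg_apply, h']

theorem cands_cross (hprop : KGProper 2 (2 * n) n s C c) (hs : s < n)
    {x y : Fin (2 * n) → SignType} (hxy : below x y) {S₁ S₂ : Finset (Fin (2 * n))}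
    (hS₁ : S₁ ∈ CandA n s x) (hS₂ : S₂ ∈ CandB n s y) (hcol : c S₁ = c S₂) : False := by
  rcases Finset.mem_filter.1 hS₁ with ⟨hS₁p, hS₁d, _⟩
  rcases Finset.mem_filter.1 hS₂ with ⟨hS₂p, _, hS₂a⟩
  have h1 : S₁.card = n := Finset.mem_powersetCard_univ.1 hS₁p
  have h2 : S₂.card = n := Finset.mem_powersetCard_univ.1 hS₂p
  have hsub : S₁ ∩ S₂ ⊆ S₁ \ Apos n x := by
    intro i hi
    rcases Finset.mem_inter.1 hi with ⟨hi1, hi2⟩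
    rw [Finset.mem_sdiff]
    refine ⟨hi1, ?_⟩
    intro hiA
    have hx1 : x i = 1 := (Finset.mem_filter.1 hiA).2
    have hy1 : y i = 1 := by
      rcases hxy i with h | h
      · rw [hx1] at h
        exact absurd h (by decide)
      · rw [← h, hx1]
    have hiAy : i ∈ Apos n y := Finset.mem_filter.2 ⟨Finset.mem_univ _, hy1⟩
    have hmem : i ∈ S₂ ∩ Apos n y := Finset.mem_inter.2 ⟨hi2, hiAy⟩
    rw [hS₂a] at hmem
    exact absurd hmem (Finset.notMem_empty _)
  have hint : (S₁ ∩ S₂).card ≤ s := le_trans (Finset.card_le_card hsub) hS₁d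
  exact edge_absurd n s C c hprop hs h1 h2 hint hcol

theorem cands_cross' (hprop : KGProper 2 (2 * n) n s C c) (hs : s < n)
    {x y : Fin (2 * n) → SignType} (hxy : below x y) {S₁ S₂ : Finset (Fin (2 * n))}
    (hS₁ : S₁ ∈ CandB n s x) (hS₂ : S₂ ∈ CandA n s y) (hcol : c S₁ = c S₂) : False := by
  apply cands_cross n s C c hprop hs (below_neg n hxy) (S₁ := S₁) (S₂ := S₂) _ _ hcol
  · rw [candA_neg]
    exact hS₁
  · rw [candB_neg]
    exact hS₂

theorem mcol_lt (x : Fin (2 * n) → SignType)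
    (hne : (CandA n s x ∪ CandB n s x).Nonempty) :
    mcol n s C c x < C ∧ (attA n s C c x ∨ attB n s C c x) := by
  classical
  have himg : (((CandA n s x ∪ CandB n s x)).image (fun S => (c S).val)).Nonempty :=
    hne.image _
  obtain ⟨v, hv⟩ := Finset.max_of_nonempty himg
  have hmc : mcol n s C c x = v := by
    unfold mcol
    rw [hv]
    rfl
  have hvmem := Finset.mem_of_max hv
  rcases Finset.mem_image.1 hvmem with ⟨S, hS, hSv⟩
  constructor
  · rw [hmc, ← hSv]
    exact (c S).2
  · rcases Finset.mem_union.1 hS with h | h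
    · exact Or.inl ⟨S, h, by rw [hSv, hmc]⟩
    · exact Or.inr ⟨S, h, by rw [hSv, hmc]⟩

theorem mcol_neg (x : Fin (2 * n) → SignType) : mcol n s C c (-x) = mcol n s C c x := by
  unfold mcol
  rw [candA_neg, candB_neg, Finset.union_comm]

theorem att_not_both (hprop : KGProper 2 (2 * n) n s C c) (hs : s < n)
    (x : Fin (2 * n) → SignType) : ¬ (attA n s C c x ∧ attB n s C c x) := by
  rintro ⟨⟨S₁, h₁, e₁⟩, ⟨S₂, h₂, e₂⟩⟩
  exact cands_cross n s C c hprop hs (below_refl n x) h₁ h₂ (Fin.ext (by rw [e₁, e₂]))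

theorem attA_neg (x : Fin (2 * n) → SignType) : attA n s C c (-x) ↔ attB n s C c x := by
  unfold attA attB
  rw [candA_neg, mcol_neg]

end Application3


section Final

variable (n s C : ℕ) (c : Finset (Fin (2 * n)) → Fin C)

theorem lamK_ne : ∀ x : Fin (2 * n) → SignType, x ≠ 0 → lamK n s C c x ≠ 0 := by
  intro x hx
  have hr := runs_sgns_pos n hx
  unfold lamK
  split_ifs with hsm hhd hat
  · exact Int.natCast_ne_zero.2 (by omega)
  · exact neg_ne_zero.2 (Int.natCast_ne_zero.2 (by omega))
  · exact Int.natCast_ne_zero.2 (by omega)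
  · exact neg_ne_zero.2 (Int.natCast_ne_zero.2 (by omega))

theorem lamK_bd (hs : s < n) : ∀ x : Fin (2 * n) → SignType, x ≠ 0 →
    (lamK n s C c x).natAbs ≤ 2 * n - (2 * s + 2) + C := by
  intro x hx
  unfold lamK
  split_ifs with hsm hhd hat
  · rw [Int.natAbs_natCast]
    omega
  · rw [Int.natAbs_neg, Int.natAbs_natCast]
    omega
  · rw [Int.natAbs_natCast]
    have := (mcol_lt n s C c x (cands_nonempty n s x hs hx hsm)).1
    omega
  · rw [Int.natAbs_neg, Int.natAbs_natCast]
    have := (mcol_lt n s C c x (cands_nonempty n s x hs hx hsm)).1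
    omega

theorem lamK_anti (hprop : KGProper 2 (2 * n) n s C c) (hs : s < n) :
    ∀ x : Fin (2 * n) → SignType, x ≠ 0 →
      lamK n s C c (-x) = - lamK n s C c x := by
  intro x hx
  have hrn : runs (sgns n (-x)) = runs (sgns n x) := by
    rw [sgns_neg, runs_map_not]
  have hhd : (sgns n (-x)).head? = ((sgns n x).head?).map (! ·) := by
    rw [sgns_neg, List.head?_map]
  rcases hl : (sgns n x).head? with _ | b
  · exact absurd (List.head?_eq_none_iff.1 hl) (sgns_ne_nil n hx)
  unfold lamK
  rw [hrn, hhd, hl]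
  by_cases hsm : runs (sgns n x) + (2 * s + 2) ≤ 2 * n
  · rw [if_pos hsm, if_pos hsm]
    cases b
    · rw [if_pos (by simp), if_neg (by simp), neg_neg]
    · rw [if_neg (by simp), if_pos rfl]
  · rw [if_neg hsm, if_neg hsm, mcol_neg]
    by_cases hA : attA n s C c x
    · have hnB : ¬ attB n s C c x := fun hB => att_not_both n s C c hprop hs x ⟨hA, hB⟩
      rw [if_neg (fun h => hnB ((attA_neg n s C c x).1 h)), if_pos hA]
    · have hor := (mcol_lt n s C c x (cands_nonempty n s x hs hx hsm)).2
      have hB : attB n s C c x := hor.resolve_left hA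
      rw [if_pos ((attA_neg n s C c x).2 hB), if_neg hA, neg_neg]

theorem lamK_comp (hprop : KGProper 2 (2 * n) n s C c) (hs : s < n) :
    ∀ x y : Fin (2 * n) → SignType, x ≠ 0 → below x y →
      lamK n s C c x ≠ - lamK n s C c y := by
  intro x y hx hxy heq
  have hy : y ≠ 0 := by
    intro h
    apply hx
    funext i
    rcases hxy i with h' | h'
    · exact h'
    · rw [h']
      have := congrFun h i
      simpa using this
  have hsubl := sgns_sublist n hxy
  have hrle := runs_sublist hsubl
  have hrx := runs_sgns_pos n hx
  have habs := congrArg Int.natAbs heq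
  rw [Int.natAbs_neg] at habs
  by_cases hsx : runs (sgns n x) + (2 * s + 2) ≤ 2 * n <;>
    by_cases hsy : runs (sgns n y) + (2 * s + 2) ≤ 2 * n
  · -- both small
    rcases hlx : (sgns n x).head? with _ | bx
    · exact absurd (List.head?_eq_none_iff.1 hlx) (sgns_ne_nil n hx)
    rcases hly : (sgns n y).head? with _ | by'
    · exact absurd (List.head?_eq_none_iff.1 hly) (sgns_ne_nil n hy)
    by_cases hbxy : bx = by'
    · subst hbxy
      unfold lamK at heq
      rw [if_pos hsx, if_pos hsy, hlx, hly] at heq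
      cases bx
      · rw [if_neg (by simp), if_neg (by simp)] at heq
        omega
      · rw [if_pos rfl, if_pos rfl] at heq
        omega
    · have hlt := runs_lt_of_head_ne hsubl bx by' hlx hly hbxy
      unfold lamK at habs
      rw [if_pos hsx, if_pos hsy, hlx, hly] at habs
      split_ifs at habs <;>
        simp only [Int.natAbs_neg, Int.natAbs_natCast] at habs <;> omega
  · -- small x, large y
    unfold lamK at habs
    rw [if_pos hsx, if_neg hsy] at habs
    split_ifs at habs <;>
      simp only [Int.natAbs_neg, Int.natAbs_natCast] at habs <;> omega
  · -- large x, small y : impossible since runs monotone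
    omega
  · -- both large
    unfold lamK at heq
    rw [if_neg hsx, if_neg hsy] at heq
    have hmx := mcol_lt n s C c x (cands_nonempty n s x hs hx hsx)
    have hmy := mcol_lt n s C c y (cands_nonempty n s y hs hy hsy)
    have hmeq : mcol n s C c x = mcol n s C c y := by
      unfold lamK at habs
      rw [if_neg hsx, if_neg hsy] at habs
      split_ifs at habs <;>
        simp only [Int.natAbs_neg, Int.natAbs_natCast] at habs <;> omega
    by_cases hAx : attA n s C c x
    · rw [if_pos hAx] at heq
      have hAy : ¬ attA n s C c y := by
        intro hAy
        rw [if_pos hAy] at heq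
        omega
      have hBy : attB n s C c y := (hmy.2).resolve_left hAy
      obtain ⟨S₁, hS₁, e₁⟩ := hAx
      obtain ⟨S₂, hS₂, e₂⟩ := hBy
      exact cands_cross n s C c hprop hs hxy hS₁ hS₂ (Fin.ext (by rw [e₁, e₂, hmeq]))
    · have hBx : attB n s C c x := (hmx.2).resolve_left hAx
      rw [if_neg hAx] at heq
      have hAy : attA n s C c y := by
        by_contra hAy
        rw [if_neg hAy] at heq
        omega
      obtain ⟨S₁, hS₁, e₁⟩ := hBx
      obtain ⟨S₂, hS₂, e₂⟩ := hAy
      exact cands_cross' n s C c hprop hs hxy hS₁ hS₂ (Fin.ext (by rw [e₁, e₂, hmeq]))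

end Final

end KneserHalf

/-- `χ(KG^2(2n, n, s)) ≥ 2s + 2` for `n > s ≥ 0`. -/
theorem chromatic_lower_bound_kneser_half (n s : ℕ) (hs : s < n)
    (C : ℕ) (c : Finset (Fin (2 * n)) → Fin C) (hc : KGProper 2 (2 * n) n s C c) :
    2 * s + 2 ≤ C := by
  rcases Nat.eq_zero_or_pos C with rfl | hC
  · exact (c ∅).elim0
  · have h := KneserHalf.octTucker (2 * n) (2 * n - (2 * s + 2) + C)
      (KneserHalf.lamK n s C c)
      (KneserHalf.lamK_ne n s C c)
      (KneserHalf.lamK_anti n s C c hc hs)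
      (KneserHalf.lamK_comp n s C c hc hs)
      (KneserHalf.lamK_bd n s C c hs)
    omega
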